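/- arXiv:0803.1249 — 5 statements merged into one kernel-verified Lean document; each statement's English description precedes it below -/
import Mathlib

section
/- For every y ∈ Ω and every x ∈ P, letting ρ = ∇ₓu(y,x) (so that ∇_ρφ(y,ρ) = x), one has the identity −Δ_y u(y,x) = Δ_y φ(y,ρ) − Σ_{a=1}^{n} ⟨(∇²_ρφ(y,ρ))⁻¹ ∇_ρ(∂_{y_a}φ)(y,ρ), ∇_ρ(∂_{y_a}φ)(y,ρ)⟩, where Δ_y = Σ_{a=1}^{n} ∂²/∂y_a² is the Euclidean Laplacian in the parameter variables y. (This is the Laplace–Legendre identity: the Legendre transform intertwines the Laplacian in the parameters with the torus-invariant harmonic map operator.) -/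
open scoped BigOperators
open MeasureTheory Real

noncomputable section

/-- Partial derivative of `f` at `p` in the `i`-th coordinate direction. -/
def pd {k : ℕ} (f : (Fin k → ℝ) → ℝ) (i : Fin k) (p : Fin k → ℝ) : ℝ :=
  fderiv ℝ f p (Pi.single i 1)

/-- Euclidean gradient, as the vector of partial derivatives. -/
def grad {k : ℕ} (f : (Fin k → ℝ) → ℝ) (p : Fin k → ℝ) : Fin k → ℝ :=
  fun i => pd f i p

/-- Hessian matrix of second partial derivatives. -/
def hess {k : ℕ} (f : (Fin k → ℝ) → ℝ) (p : Fin k → ℝ) : Matrix (Fin k) (Fin k) ℝ :=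
  Matrix.of fun i j => pd (fun q => pd f j q) i p

/-- Euclidean Laplacian. -/
def lap {k : ℕ} (f : (Fin k → ℝ) → ℝ) (p : Fin k → ℝ) : ℝ :=
  ∑ i, pd (fun q => pd f i q) i p

/-- Euclidean inner product on `Fin k → ℝ`. -/
def dotp {k : ℕ} (v w : Fin k → ℝ) : ℝ := ∑ i, v i * w i

/-- A continuous linear functional on `Fin k → ℝ` is determined by its values on basis vectors. -/
lemma clm_sum {k : ℕ} (L : (Fin k → ℝ) →L[ℝ] ℝ) (w : Fin k → ℝ) :
    L w = ∑ i, w i * L (Pi.single i 1) := by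
  have hw : w = ∑ i, (w i) • (Pi.single i (1:ℝ) : Fin k → ℝ) := by
    funext j
    simp [Finset.sum_apply, Pi.single_apply]
  conv_lhs => rw [hw]
  rw [map_sum]
  refine Finset.sum_congr rfl fun i _ => ?_
  simp

lemma pd_congr {k : ℕ} {f g : (Fin k → ℝ) → ℝ} {p : Fin k → ℝ} (h : f =ᶠ[nhds p] g)
    (i : Fin k) : pd f i p = pd g i p := by
  unfold pd; rw [h.fderiv_eq]

/-- evaluation of fderiv as sum of partials -/
lemma fderiv_apply_pd {k : ℕ} {f : (Fin k → ℝ) → ℝ} {p : Fin k → ℝ} (w : Fin k → ℝ) :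
    fderiv ℝ f p w = ∑ i, w i * pd f i p := by
  rw [clm_sum (fderiv ℝ f p) w]; rfl

/-- evaluation commutes with fderiv for CLM-valued maps -/
lemma fderiv_eval {X : Type*} [NormedAddCommGroup X] [NormedSpace ℝ X]
    {k : ℕ} {F : X → ((Fin k → ℝ) →L[ℝ] ℝ)} {p : X} (hF : DifferentiableAt ℝ F p)
    (w : Fin k → ℝ) (z : X) :
    fderiv ℝ (fun q => F q w) p z = (fderiv ℝ F p z) w := by
  have h := ((ContinuousLinearMap.apply ℝ ℝ w).hasFDerivAt.comp p hF.hasFDerivAt).fderiv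
  have : fderiv ℝ (fun q => F q w) p
      = (ContinuousLinearMap.apply ℝ ℝ w).comp (fderiv ℝ F p) := h
  rw [this]; rfl

lemma legendre_sup {k : ℕ} (f : (Fin k → ℝ) → ℝ) (hf : ContDiff ℝ (⊤:ℕ∞) f)
    (hsemi : ∀ ρ, (hess f ρ).PosSemidef) (x ρ₀ ρ : Fin k → ℝ)
    (hcrit : grad f ρ₀ = x) : dotp x ρ - f ρ ≤ dotp x ρ₀ - f ρ₀ := by
  set v := ρ - ρ₀ with hv
  set γ : ℝ → (Fin k → ℝ) := fun t => ρ₀ + t • v with hγ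
  have hγd : ∀ t, HasDerivAt γ v t := by
    intro t
    have := ((hasDerivAt_id t).smul_const v).const_add ρ₀
    simp only [one_smul] at this
    exact this
  set D : ℝ → ℝ := fun t => fderiv ℝ f (γ t) v - dotp x v with hD
  set ψ : ℝ → ℝ := fun t => f (γ t) - dotp x (γ t) with hψ
  have hψd : ∀ t, HasDerivAt ψ (D t) t := by
    intro t
    have h1 : HasDerivAt (fun t => f (γ t)) (fderiv ℝ f (γ t) v) t :=
      (hf.differentiable (by simp) (γ t)).hasFDerivAt.comp_hasDerivAt t (hγd t)
    have h2 : HasDerivAt (fun t => dotp x (γ t)) (dotp x v) t := by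
      have he : (fun t => dotp x (γ t)) = fun t => dotp x ρ₀ + t * dotp x v := by
        funext s; simp only [dotp, hγ]
        rw [Finset.mul_sum, ← Finset.sum_add_distrib]
        refine Finset.sum_congr rfl fun i _ => ?_
        simp only [Pi.add_apply, Pi.smul_apply, smul_eq_mul]; ring
      rw [he]
      simpa using ((hasDerivAt_id t).mul_const (dotp x v)).const_add (dotp x ρ₀)
    exact h1.sub h2
  set g : (Fin k → ℝ) → ℝ := fun p => fderiv ℝ f p v with hg
  have hfd : ContDiff ℝ (⊤:ℕ∞) (fderiv ℝ f) := hf.fderiv_right (by exact_mod_cast le_top)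
  have hgc : ContDiff ℝ (⊤:ℕ∞) g :=
    (ContinuousLinearMap.apply ℝ ℝ v).contDiff.comp hfd
  have hDd : ∀ t, HasDerivAt D (fderiv ℝ g (γ t) v) t := fun t =>
    ((hgc.differentiable (by simp) (γ t)).hasFDerivAt.comp_hasDerivAt t (hγd t)).sub_const _
  -- the second derivative is the Hessian quadratic form
  have key : ∀ p, fderiv ℝ g p v = dotp v ((hess f p).mulVec v) := by
    intro p
    have h1 : fderiv ℝ g p v = (fderiv ℝ (fderiv ℝ f) p v) v :=
      fderiv_eval (hfd.differentiable (by simp) p) v v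
    rw [h1, clm_sum (fderiv ℝ (fderiv ℝ f) p v)]
    have h2 : ∀ i, (fderiv ℝ (fderiv ℝ f) p v) (Pi.single i 1)
        = ∑ j, v j * pd (fun q => pd f i q) j p := by
      intro i
      have h3 : fderiv ℝ (fun q => fderiv ℝ f q (Pi.single i 1)) p v
          = (fderiv ℝ (fderiv ℝ f) p v) (Pi.single i 1) :=
        fderiv_eval (hfd.differentiable (by simp) p) _ v
      rw [← h3, fderiv_apply_pd]
      rfl
    rw [Finset.sum_congr rfl fun i _ => by rw [h2 i]]
    simp only [dotp, Matrix.mulVec, dotProduct, hess, Matrix.of_apply]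
    simp only [Finset.mul_sum]
    rw [Finset.sum_comm]
    exact Finset.sum_congr rfl fun j _ => Finset.sum_congr rfl fun i _ => by ring
  have hQpos : ∀ t, 0 ≤ fderiv ℝ g (γ t) v := by
    intro t
    rw [key]
    have := (hsemi (γ t)).dotProduct_mulVec_nonneg v
    simpa [dotProduct, dotp] using this
  have hDmono : Monotone D :=
    monotone_of_deriv_nonneg (fun t => (hDd t).differentiableAt)
      (fun t => by rw [(hDd t).deriv]; exact hQpos t)
  have hD0 : D 0 = 0 := by
    have : fderiv ℝ f (γ 0) v = dotp x v := by
      have hγ0 : γ 0 = ρ₀ := by simp [hγ]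
      rw [hγ0, fderiv_apply_pd]
      simp only [dotp]
      refine Finset.sum_congr rfl fun i _ => ?_
      rw [show pd f i ρ₀ = x i from by rw [← hcrit]; rfl]
      ring
    simp [hD, this]
  have hψmono : MonotoneOn ψ (Set.Icc 0 1) := by
    refine monotoneOn_of_deriv_nonneg (convex_Icc 0 1)
      (fun t _ => (hψd t).differentiableAt.continuousAt.continuousWithinAt)
      (fun t _ => (hψd t).differentiableAt.differentiableWithinAt) ?_
    intro t ht
    rw [(hψd t).deriv]
    rw [← hD0]
    exact hDmono (le_of_lt (by simpa using (Set.mem_Ioo.1 (by simpa using ht)).1))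
  have h01 : ψ 0 ≤ ψ 1 := hψmono (by norm_num) (by norm_num) (by norm_num)
  have hγ0 : γ 0 = ρ₀ := by simp [hγ]
  have hγ1 : γ 1 = ρ := by simp [hγ, hv]
  simp only [hψ, hγ0, hγ1] at h01
  linarith

/-- generalized evaluation/fderiv commutation -/
lemma fderiv_eval' {X Y : Type*} [NormedAddCommGroup X] [NormedSpace ℝ X]
    [NormedAddCommGroup Y] [NormedSpace ℝ Y]
    {F : X → (Y →L[ℝ] ℝ)} {p : X} (hF : DifferentiableAt ℝ F p)
    (w : Y) (z : X) :
    fderiv ℝ (fun q => F q w) p z = (fderiv ℝ F p z) w := by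
  have h : fderiv ℝ (fun q => F q w) p
      = (ContinuousLinearMap.apply ℝ ℝ w).comp (fderiv ℝ F p) :=
    ((ContinuousLinearMap.apply ℝ ℝ w).hasFDerivAt.comp p hF.hasFDerivAt).fderiv
  rw [h]; rfl

section slices
variable {X : Type*} [NormedAddCommGroup X] [NormedSpace ℝ X]
  {n m : ℕ} {Ψ : (Fin n → ℝ) × (Fin m → ℝ) → X} {y : Fin n → ℝ} {x : Fin m → ℝ}

lemma hasFDerivAt_slice_fst (h : DifferentiableAt ℝ Ψ (y, x)) :
    HasFDerivAt (fun y' => Ψ (y', x))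
      ((fderiv ℝ Ψ (y, x)).comp (ContinuousLinearMap.inl ℝ _ _)) y :=
  h.hasFDerivAt.comp y ((hasFDerivAt_id y).prodMk (hasFDerivAt_const x y))

lemma hasFDerivAt_slice_snd (h : DifferentiableAt ℝ Ψ (y, x)) :
    HasFDerivAt (fun x' => Ψ (y, x'))
      ((fderiv ℝ Ψ (y, x)).comp (ContinuousLinearMap.inr ℝ _ _)) x :=
  h.hasFDerivAt.comp x ((hasFDerivAt_const y x).prodMk (hasFDerivAt_id x))

end slices

section scalar_slices
variable {n m : ℕ} {Ψ : (Fin n → ℝ) × (Fin m → ℝ) → ℝ} {y : Fin n → ℝ} {x : Fin m → ℝ}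

lemma pd_slice_fst (h : DifferentiableAt ℝ Ψ (y, x)) (a : Fin n) :
    pd (fun y' => Ψ (y', x)) a y = fderiv ℝ Ψ (y, x) (Pi.single a 1, 0) := by
  unfold pd
  rw [(hasFDerivAt_slice_fst h).fderiv]
  simp

lemma pd_slice_snd (h : DifferentiableAt ℝ Ψ (y, x)) (i : Fin m) :
    pd (fun x' => Ψ (y, x')) i x = fderiv ℝ Ψ (y, x) (0, Pi.single i 1) := by
  unfold pd
  rw [(hasFDerivAt_slice_snd h).fderiv]
  simp

end scalar_slices

/-- the linear functional `dotp · ρ₀` as a continuous linear map -/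
lemma dotp_clm {k : ℕ} (ρ₀ : Fin k → ℝ) :
    ∃ L : (Fin k → ℝ) →L[ℝ] ℝ, ∀ x', L x' = dotp x' ρ₀ := by
  refine ⟨∑ j, ρ₀ j • (ContinuousLinearMap.proj j :
      ((Fin k) → ℝ) →L[ℝ] ℝ), fun x' => ?_⟩
  simp [dotp, ContinuousLinearMap.sum_apply, mul_comm]

lemma hess_symm {k : ℕ} (f : (Fin k → ℝ) → ℝ) (hf : ContDiff ℝ (⊤:ℕ∞) f)
    (p : Fin k → ℝ) (i j : Fin k) : hess f p i j = hess f p j i := by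
  have hfd : ContDiff ℝ (⊤:ℕ∞) (fderiv ℝ f) := hf.fderiv_right (by exact_mod_cast le_top)
  have h1 : ∀ b c : Fin k, hess f p b c
      = (fderiv ℝ (fderiv ℝ f) p) (Pi.single b 1) (Pi.single c 1) := by
    intro b c
    show pd (fun q => pd f c q) b p = _
    unfold pd
    exact fderiv_eval' (hfd.differentiable (by simp) p) _ _
  rw [h1, h1]
  exact second_derivative_symmetric
    (fun q => (hf.differentiable (by simp) q).hasFDerivAt)
    ((hfd.differentiable (by simp) p).hasFDerivAt) _ _

/-- **Laplace–Legendre identity.**  For a smooth family `φ : Ω × ℝᵐ → ℝ` of strictly convex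
functions whose `ρ`-gradient is a bijection onto a fixed open set `P`, with fiberwise
Legendre transform `u`, one has
`−Δ_y u(y,x) = Δ_y φ(y,ρ) − Σ_a ⟨(∇²_ρφ)⁻¹ ∇_ρ(∂_{y_a}φ), ∇_ρ(∂_{y_a}φ)⟩` at `ρ = ∇ₓu(y,x)`. -/
theorem laplace_legendre_identity
    {m n : ℕ} (hm : 1 ≤ m) (hn : 1 ≤ n)
    (Ω : Set (Fin n → ℝ)) (hΩ : IsOpen Ω)
    (P : Set (Fin m → ℝ)) (hP : IsOpen P)
    (φ : (Fin n → ℝ) → (Fin m → ℝ) → ℝ)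
    (hφ : ContDiffOn ℝ (⊤ : ℕ∞)
      (fun p : (Fin n → ℝ) × (Fin m → ℝ) => φ p.1 p.2) (Ω ×ˢ Set.univ))
    (hpos : ∀ y ∈ Ω, ∀ ρ : Fin m → ℝ, (hess (φ y) ρ).PosDef)
    -- `R y` is the inverse of the gradient map `∇_ρ φ(y,·) : ℝᵐ → P`
    (R : (Fin n → ℝ) → (Fin m → ℝ) → (Fin m → ℝ))
    (hmem : ∀ y ∈ Ω, ∀ ρ : Fin m → ℝ, grad (φ y) ρ ∈ P)
    (hR₁ : ∀ y ∈ Ω, ∀ x ∈ P, grad (φ y) (R y x) = x)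
    (hR₂ : ∀ y ∈ Ω, ∀ ρ : Fin m → ℝ, R y (grad (φ y) ρ) = ρ)
    -- `u(y,·)` is the Legendre transform of `φ(y,·)`
    (u : (Fin n → ℝ) → (Fin m → ℝ) → ℝ)
    (hu : ∀ y ∈ Ω, ∀ x ∈ P, u y x = dotp x (R y x) - φ y (R y x))
    (husm : ContDiffOn ℝ (⊤ : ℕ∞)
      (fun p : (Fin n → ℝ) × (Fin m → ℝ) => u p.1 p.2) (Ω ×ˢ P)) :
    ∀ y ∈ Ω, ∀ x ∈ P,
      -(lap (fun y' => u y' x) y)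
        = lap (fun y' => φ y' (R y x)) y
          - ∑ a : Fin n,
              dotp
                ((hess (φ y) (R y x))⁻¹.mulVec
                  (grad (fun ρ' => pd (fun y' => φ y' ρ') a y) (R y x)))
                (grad (fun ρ' => pd (fun y' => φ y' ρ') a y) (R y x)) := by
  classical
  intro y₀ hy₀ x₀ hx₀
  have hΩP : IsOpen (Ω ×ˢ P) := hΩ.prod hP
  have hΩU : IsOpen (Ω ×ˢ (Set.univ : Set (Fin m → ℝ))) := hΩ.prod isOpen_univ
  set Φ : (Fin n → ℝ) × (Fin m → ℝ) → ℝ := fun p => φ p.1 p.2 with hΦdef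
  set U : (Fin n → ℝ) × (Fin m → ℝ) → ℝ := fun p => u p.1 p.2 with hUdef
  have hΦdiff : ∀ y ∈ Ω, ∀ ρ : Fin m → ℝ, DifferentiableAt ℝ Φ (y, ρ) := fun y hy ρ =>
    (hφ.differentiableOn (by simp)).differentiableAt
      (hΩU.mem_nhds (Set.mk_mem_prod hy trivial))
  have hUdiff : ∀ y ∈ Ω, ∀ x ∈ P, DifferentiableAt ℝ U (y, x) := fun y hy x hx =>
    (husm.differentiableOn (by simp)).differentiableAt
      (hΩP.mem_nhds (Set.mk_mem_prod hy hx))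
  have hslice : ∀ y ∈ Ω, ContDiff ℝ (⊤:ℕ∞) (φ y) := by
    intro y hy
    rw [← contDiffOn_univ]
    have hmap : Set.MapsTo (fun ρ : Fin m → ℝ => (y, ρ)) Set.univ (Ω ×ˢ Set.univ) :=
      fun ρ _ => Set.mk_mem_prod hy trivial
    exact hφ.comp ((contDiff_const.prodMk contDiff_id).contDiffOn) hmap
  have hgradpd : ∀ y ∈ Ω, ∀ ρ : Fin m → ℝ, ∀ i : Fin m,
      grad (φ y) ρ i = fderiv ℝ Φ (y, ρ) (0, Pi.single i 1) := by
    intro y hy ρ i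
    exact pd_slice_snd (hΦdiff y hy ρ) i
  -- Claim A : envelope formula for the y-derivatives of u
  have claimA : ∀ y ∈ Ω, ∀ x ∈ P, ∀ a : Fin n,
      pd (fun y' => u y' x) a y = -(fderiv ℝ Φ (y, R y x) (Pi.single a 1, 0)) := by
    intro y hy x hx a
    have hLu : HasFDerivAt (fun y' => u y' x)
        ((fderiv ℝ U (y, x)).comp (ContinuousLinearMap.inl ℝ _ _)) y :=
      hasFDerivAt_slice_fst (hUdiff y hy x hx)
    have hLφ : HasFDerivAt (fun y' => φ y' (R y x))
        ((fderiv ℝ Φ (y, R y x)).comp (ContinuousLinearMap.inl ℝ _ _)) y :=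
      hasFDerivAt_slice_fst (hΦdiff y hy (R y x))
    have hw : HasFDerivAt (fun y' => u y' x - dotp x (R y x) + φ y' (R y x))
        ((fderiv ℝ U (y, x)).comp (ContinuousLinearMap.inl ℝ _ _)
          + (fderiv ℝ Φ (y, R y x)).comp (ContinuousLinearMap.inl ℝ _ _)) y :=
      (hLu.sub_const _).add hLφ
    have hmin : IsLocalMin (fun y' => u y' x - dotp x (R y x) + φ y' (R y x)) y := by
      have h0 : u y x - dotp x (R y x) + φ y (R y x) = 0 := by rw [hu y hy x hx]; ring
      show ∀ᶠ y' in nhds y, _ ≤ _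
      filter_upwards [hΩ.mem_nhds hy] with y' hy'
      show u y x - dotp x (R y x) + φ y (R y x) ≤ u y' x - dotp x (R y x) + φ y' (R y x)
      rw [h0]
      have hsup := legendre_sup (φ y') (hslice y' hy')
        (fun ρ => (hpos y' hy' ρ).posSemidef) x (R y' x) (R y x) (hR₁ y' hy' x hx)
      have h1 := hu y' hy' x hx
      linarith
    have hz := hmin.fderiv_eq_zero
    rw [hw.fderiv] at hz
    have hz' := ContinuousLinearMap.ext_iff.mp hz (Pi.single a 1)
    simp only [ContinuousLinearMap.add_apply, ContinuousLinearMap.comp_apply,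
      ContinuousLinearMap.inl_apply, ContinuousLinearMap.zero_apply] at hz'
    have hpdu : pd (fun y' => u y' x) a y
        = fderiv ℝ U (y, x) (Pi.single a 1, 0) := by
      unfold pd; rw [hLu.fderiv]; simp
    rw [hpdu]; linarith
  -- Claim B : x-gradient of u recovers R
  have claimB : ∀ y ∈ Ω, ∀ x ∈ P, ∀ i : Fin m,
      R y x i = fderiv ℝ U (y, x) (0, Pi.single i 1) := by
    intro y hy x hx i
    obtain ⟨Ld, hLd⟩ := dotp_clm (R y x)
    have hLu : HasFDerivAt (fun x' => u y x')
        ((fderiv ℝ U (y, x)).comp (ContinuousLinearMap.inr ℝ _ _)) x :=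
      hasFDerivAt_slice_snd (hUdiff y hy x hx)
    have hdL : HasFDerivAt (fun x' => dotp x' (R y x)) Ld x := by
      have he : (fun x' : Fin m → ℝ => dotp x' (R y x)) = fun x' => Ld x' := by
        funext x'; rw [hLd]
      rw [he]; exact Ld.hasFDerivAt
    have hw : HasFDerivAt (fun x' => u y x' - dotp x' (R y x) + φ y (R y x))
        ((fderiv ℝ U (y, x)).comp (ContinuousLinearMap.inr ℝ _ _) - Ld) x :=
      (hLu.sub hdL).add_const _
    have hmin : IsLocalMin (fun x' => u y x' - dotp x' (R y x) + φ y (R y x)) x := by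
      have h0 : u y x - dotp x (R y x) + φ y (R y x) = 0 := by rw [hu y hy x hx]; ring
      show ∀ᶠ x' in nhds x, _ ≤ _
      filter_upwards [hP.mem_nhds hx] with x' hx'
      show u y x - dotp x (R y x) + φ y (R y x) ≤ u y x' - dotp x' (R y x) + φ y (R y x)
      rw [h0]
      have hsup := legendre_sup (φ y) (hslice y hy)
        (fun ρ => (hpos y hy ρ).posSemidef) x' (R y x') (R y x) (hR₁ y hy x' hx')
      have h1 := hu y hy x' hx'
      linarith
    have hz := hmin.fderiv_eq_zero
    rw [hw.fderiv] at hz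
    have hz' := ContinuousLinearMap.ext_iff.mp hz (Pi.single i 1)
    simp only [ContinuousLinearMap.sub_apply, ContinuousLinearMap.comp_apply,
      ContinuousLinearMap.inr_apply, ContinuousLinearMap.zero_apply] at hz'
    have hLd' : Ld (Pi.single i 1) = R y x i := by
      rw [hLd]
      simp [dotp, Pi.single_apply, Finset.sum_ite_eq']
    rw [hLd'] at hz'
    linarith
  -- smoothness of the inverse gradient map via `R = ∇ₓ u`
  have hU' : ContDiffOn ℝ (⊤:ℕ∞) (fderiv ℝ U) (Ω ×ˢ P) :=
    husm.fderiv_of_isOpen hΩP (by exact_mod_cast le_top)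
  set Rf : (Fin n → ℝ) × (Fin m → ℝ) → (Fin m → ℝ) :=
    fun p i => fderiv ℝ U p ((0 : Fin n → ℝ), Pi.single i 1) with hRfdef
  have hRfsm : ContDiffOn ℝ (⊤:ℕ∞) Rf (Ω ×ˢ P) := by
    apply contDiffOn_pi.mpr
    intro i
    exact (ContinuousLinearMap.apply ℝ ℝ
      ((0 : Fin n → ℝ), Pi.single i 1)).contDiff.comp_contDiffOn hU'
  have hRRf : ∀ y ∈ Ω, ∀ x ∈ P, R y x = Rf (y, x) := by
    intro y hy x hx; funext i; exact claimB y hy x hx i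
  have hΦ' : ContDiffOn ℝ (⊤:ℕ∞) (fderiv ℝ Φ) (Ω ×ˢ Set.univ) :=
    hφ.fderiv_of_isOpen hΩU (by exact_mod_cast le_top)
  set ρ₀ : Fin m → ℝ := R y₀ x₀ with hρ₀
  set H : Matrix (Fin m) (Fin m) ℝ := hess (φ y₀) ρ₀ with hH
  set v : Fin n → (Fin m → ℝ) :=
    fun a => grad (fun ρ' => pd (fun y' => φ y' ρ') a y₀) ρ₀ with hv
  have hRfdiff : DifferentiableAt ℝ Rf (y₀, x₀) :=
    (hRfsm.differentiableOn (by simp)).differentiableAt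
      (hΩP.mem_nhds (Set.mk_mem_prod hy₀ hx₀))
  have hS : HasFDerivAt (fun q => Rf (q, x₀))
      ((fderiv ℝ Rf (y₀, x₀)).comp (ContinuousLinearMap.inl ℝ _ _)) y₀ :=
    hasFDerivAt_slice_fst hRfdiff
  set LS := (fderiv ℝ Rf (y₀, x₀)).comp
    (ContinuousLinearMap.inl ℝ (Fin n → ℝ) (Fin m → ℝ)) with hLSdef
  set w : Fin n → (Fin m → ℝ) := fun a => LS (Pi.single a 1) with hwdef
  have hc : HasFDerivAt (fun q => (q, Rf (q, x₀)))
      ((ContinuousLinearMap.id ℝ _).prod LS) y₀ := (hasFDerivAt_id y₀).prodMk hS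
  have hSy₀ : Rf (y₀, x₀) = ρ₀ := (hRRf y₀ hy₀ x₀ hx₀).symm
  set G : (Fin n → ℝ) × (Fin m → ℝ) → Fin m → ℝ :=
    fun p i => fderiv ℝ Φ p ((0 : Fin n → ℝ), Pi.single i 1) with hGdef
  set A : Fin n → (Fin n → ℝ) × (Fin m → ℝ) → ℝ :=
    fun a p => fderiv ℝ Φ p ((Pi.single a 1 : Fin n → ℝ), (0 : Fin m → ℝ)) with hAdef
  have hΦ'diff : ∀ ρ : Fin m → ℝ, DifferentiableAt ℝ (fderiv ℝ Φ) (y₀, ρ) := fun ρ =>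
    (hΦ'.differentiableOn (by simp)).differentiableAt
      (hΩU.mem_nhds (Set.mk_mem_prod hy₀ trivial))
  have hGdiff : ∀ ρ : Fin m → ℝ, ∀ i : Fin m,
      DifferentiableAt ℝ (fun p => G p i) (y₀, ρ) := by
    intro ρ i
    have h := DifferentiableAt.comp (𝕜 := ℝ) ((y₀, ρ) : (Fin n → ℝ) × (Fin m → ℝ))
      (g := fun L : ((Fin n → ℝ) × (Fin m → ℝ)) →L[ℝ] ℝ =>
        L ((0 : Fin n → ℝ), Pi.single i 1))
      ((ContinuousLinearMap.apply ℝ ℝ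
        (((0 : Fin n → ℝ), Pi.single i 1) : (Fin n → ℝ) × (Fin m → ℝ))).differentiable.differentiableAt)
      (hΦ'diff ρ)
    exact h
  have hAdiff : ∀ (a : Fin n) (ρ : Fin m → ℝ), DifferentiableAt ℝ (A a) (y₀, ρ) := by
    intro a ρ
    have h := DifferentiableAt.comp (𝕜 := ℝ) ((y₀, ρ) : (Fin n → ℝ) × (Fin m → ℝ))
      (g := fun L : ((Fin n → ℝ) × (Fin m → ℝ)) →L[ℝ] ℝ =>
        L ((Pi.single a 1 : Fin n → ℝ), (0 : Fin m → ℝ)))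
      ((ContinuousLinearMap.apply ℝ ℝ
        (((Pi.single a 1 : Fin n → ℝ), (0 : Fin m → ℝ)) : (Fin n → ℝ) × (Fin m → ℝ))).differentiable.differentiableAt)
      (hΦ'diff ρ)
    exact h
  have hsymm : ∀ z z' : (Fin n → ℝ) × (Fin m → ℝ),
      (fderiv ℝ (fderiv ℝ Φ) (y₀, ρ₀)) z z' = (fderiv ℝ (fderiv ℝ Φ) (y₀, ρ₀)) z' z := by
    intro z z'
    have hev : ∀ᶠ q in nhds ((y₀ : Fin n → ℝ), ρ₀), HasFDerivAt Φ (fderiv ℝ Φ q) q := by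
      filter_upwards [hΩU.mem_nhds (Set.mk_mem_prod hy₀ trivial)] with q hq
      exact ((hφ.differentiableOn (by simp)).differentiableAt
        (hΩU.mem_nhds hq)).hasFDerivAt
    exact second_derivative_symmetric_of_eventually hev (hΦ'diff ρ₀).hasFDerivAt z z'
  have hHsymm : ∀ b c : Fin m, H b c = H c b := fun b c =>
    hess_symm (φ y₀) (hslice y₀ hy₀) ρ₀ b c
  -- Step C : implicit differentiation of `grad (φ y) (R y x) = x`
  have stepC : ∀ a : Fin n, H.mulVec (w a) = -(v a) := by
    intro a
    funext i
    have hg : HasFDerivAt (fun p => G p i) (fderiv ℝ (fun p => G p i) (y₀, ρ₀))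
        (y₀, Rf (y₀, x₀)) := by
      rw [hSy₀]; exact (hGdiff ρ₀ i).hasFDerivAt
    have hcomp : HasFDerivAt (fun q => G (q, Rf (q, x₀)) i)
        ((fderiv ℝ (fun p => G p i) (y₀, ρ₀)).comp
          ((ContinuousLinearMap.id ℝ _).prod LS)) y₀ := by
      have h := hg.comp y₀ hc; exact h
    have hev : (fun q => G (q, Rf (q, x₀)) i) =ᶠ[nhds y₀] (fun _ => x₀ i) := by
      filter_upwards [hΩ.mem_nhds hy₀] with q hq
      have h1 : Rf (q, x₀) = R q x₀ := (hRRf q hq x₀ hx₀).symm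
      show G (q, Rf (q, x₀)) i = x₀ i
      rw [h1, show G (q, R q x₀) i = grad (φ q) (R q x₀) i from
        (hgradpd q hq (R q x₀) i).symm, hR₁ q hq x₀ hx₀]
    have hz : fderiv ℝ (fun q => G (q, Rf (q, x₀)) i) y₀ = 0 := by
      rw [hev.fderiv_eq]; exact fderiv_const_apply _
    rw [hcomp.fderiv] at hz
    have hz' : (fderiv ℝ (fun p => G p i) (y₀, ρ₀)) (Pi.single a 1, w a) = 0 := by
      have := ContinuousLinearMap.ext_iff.mp hz (Pi.single a 1)
      simpa [hwdef] using this
    have hsplit : (fderiv ℝ (fun p => G p i) (y₀, ρ₀)) (Pi.single a 1, w a)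
        = (fderiv ℝ (fun p => G p i) (y₀, ρ₀)) (Pi.single a 1, 0)
          + (fderiv ℝ (fun p => G p i) (y₀, ρ₀)) (0, w a) := by
      rw [← map_add]
      congr 1
      simp [Prod.mk_add_mk]
    have hterm1 : (fderiv ℝ (fun p => G p i) (y₀, ρ₀)) (Pi.single a 1, 0) = v a i := by
      have e1 : (fderiv ℝ (fun p => G p i) (y₀, ρ₀)) (Pi.single a 1, 0)
          = (fderiv ℝ (fderiv ℝ Φ) (y₀, ρ₀) ((Pi.single a 1 : Fin n → ℝ), (0 : Fin m → ℝ)))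
            ((0 : Fin n → ℝ), Pi.single i 1) := by
        rw [← fderiv_eval' (hΦ'diff ρ₀) ((0 : Fin n → ℝ), Pi.single i 1)
          ((Pi.single a 1 : Fin n → ℝ), (0 : Fin m → ℝ))]
      have e2 : (fderiv ℝ (fderiv ℝ Φ) (y₀, ρ₀) ((0 : Fin n → ℝ), Pi.single i 1))
            ((Pi.single a 1 : Fin n → ℝ), (0 : Fin m → ℝ))
          = fderiv ℝ (A a) (y₀, ρ₀) ((0 : Fin n → ℝ), Pi.single i 1) :=
        (fderiv_eval' (hΦ'diff ρ₀) ((Pi.single a 1 : Fin n → ℝ), (0 : Fin m → ℝ))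
          ((0 : Fin n → ℝ), Pi.single i 1)).symm
      rw [e1, hsymm, e2, ← pd_slice_snd (hAdiff a ρ₀) i]
      have hfe : (fun ρ' => A a ((y₀ : Fin n → ℝ), ρ'))
          = fun ρ' => pd (fun y' => φ y' ρ') a y₀ := by
        funext ρ'
        exact (pd_slice_fst (hΦdiff y₀ hy₀ ρ') a).symm
      rw [show pd (fun x' => A a ((y₀ : Fin n → ℝ), x')) i ρ₀
        = pd (fun ρ' => pd (fun y' => φ y' ρ') a y₀) i ρ₀ from by rw [hfe]]
      rfl
    have hterm2 : (fderiv ℝ (fun p => G p i) (y₀, ρ₀)) (0, w a)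
        = ∑ j, w a j * H j i := by
      have hsl := hasFDerivAt_slice_snd (Ψ := fun p => G p i) (hGdiff ρ₀ i)
      have h2 : fderiv ℝ (fun ρ' => G ((y₀ : Fin n → ℝ), ρ') i) ρ₀ (w a)
          = (fderiv ℝ (fun p => G p i) (y₀, ρ₀)) (0, w a) := by
        rw [hsl.fderiv]; simp
      have hfe : (fun ρ' => G ((y₀ : Fin n → ℝ), ρ') i) = fun ρ' => pd (φ y₀) i ρ' := by
        funext ρ'
        exact (hgradpd y₀ hy₀ ρ' i).symm
      rw [← h2, show fderiv ℝ (fun ρ' => G ((y₀ : Fin n → ℝ), ρ') i) ρ₀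
        = fderiv ℝ (fun ρ' => pd (φ y₀) i ρ') ρ₀ from by rw [hfe]]
      rw [fderiv_apply_pd]
      rfl
    have hfin : v a i + ∑ j, w a j * H j i = 0 := by
      rw [← hterm1, ← hterm2, ← hsplit]
      exact hz'
    show H.mulVec (w a) i = (-(v a)) i
    simp only [Matrix.mulVec, dotProduct, Pi.neg_apply]
    have hcc : ∑ j, H i j * w a j = ∑ j, w a j * H j i :=
      Finset.sum_congr rfl fun j _ => by rw [hHsymm i j]; ring
    linarith
  have hdet : IsUnit H.det :=
    isUnit_iff_ne_zero.mpr (ne_of_gt (hpos y₀ hy₀ ρ₀).det_pos)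
  have hw_eq : ∀ a : Fin n, w a = -(H⁻¹.mulVec (v a)) := by
    intro a
    have h1 : H⁻¹.mulVec (H.mulVec (w a)) = H⁻¹.mulVec (-(v a)) := by rw [stepC a]
    rw [Matrix.mulVec_mulVec, Matrix.nonsing_inv_mul H hdet, Matrix.one_mulVec] at h1
    rw [h1, Matrix.mulVec_neg]
  -- Step D : second derivatives of u in y
  have stepD : ∀ a : Fin n, pd (fun q => pd (fun y' => u y' x₀) a q) a y₀
      = -(pd (fun q => pd (fun y' => φ y' ρ₀) a q) a y₀)
        + dotp (H⁻¹.mulVec (v a)) (v a) := by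
    intro a
    have hev : (fun q => pd (fun y' => u y' x₀) a q) =ᶠ[nhds y₀]
        (fun q => -(A a (q, Rf (q, x₀)))) := by
      filter_upwards [hΩ.mem_nhds hy₀] with q hq
      show pd (fun y' => u y' x₀) a q = -(A a (q, Rf (q, x₀)))
      rw [claimA q hq x₀ hx₀ a, ← hRRf q hq x₀ hx₀]
    rw [pd_congr hev a]
    have hneg : pd (fun q => -(A a (q, Rf (q, x₀)))) a y₀
        = -(pd (fun q => A a (q, Rf (q, x₀))) a y₀) := by
      unfold pd; rw [fderiv_fun_neg]; simp
    rw [hneg]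
    have hg : HasFDerivAt (A a) (fderiv ℝ (A a) (y₀, ρ₀)) (y₀, Rf (y₀, x₀)) := by
      rw [hSy₀]; exact (hAdiff a ρ₀).hasFDerivAt
    have hcomp : HasFDerivAt (fun q => A a (q, Rf (q, x₀)))
        ((fderiv ℝ (A a) (y₀, ρ₀)).comp
          ((ContinuousLinearMap.id ℝ _).prod LS)) y₀ := by
      have h := hg.comp y₀ hc; exact h
    have hpdA : pd (fun q => A a (q, Rf (q, x₀))) a y₀
        = (fderiv ℝ (A a) (y₀, ρ₀)) (Pi.single a 1, w a) := by
      unfold pd; rw [hcomp.fderiv]; simp [hwdef]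
    have hsplit : (fderiv ℝ (A a) (y₀, ρ₀)) (Pi.single a 1, w a)
        = (fderiv ℝ (A a) (y₀, ρ₀)) (Pi.single a 1, 0)
          + (fderiv ℝ (A a) (y₀, ρ₀)) (0, w a) := by
      rw [← map_add]
      congr 1
      simp [Prod.mk_add_mk]
    have hterm1 : (fderiv ℝ (A a) (y₀, ρ₀)) (Pi.single a 1, 0)
        = pd (fun q => pd (fun y' => φ y' ρ₀) a q) a y₀ := by
      rw [← pd_slice_fst (hAdiff a ρ₀) a]
      refine pd_congr ?_ a
      filter_upwards [hΩ.mem_nhds hy₀] with q hq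
      exact (pd_slice_fst (hΦdiff q hq ρ₀) a).symm
    have hterm2 : (fderiv ℝ (A a) (y₀, ρ₀)) (0, w a) = dotp (w a) (v a) := by
      have hsl := hasFDerivAt_slice_snd (Ψ := A a) (hAdiff a ρ₀)
      have h2 : fderiv ℝ (fun ρ' => A a ((y₀ : Fin n → ℝ), ρ')) ρ₀ (w a)
          = (fderiv ℝ (A a) (y₀, ρ₀)) (0, w a) := by
        rw [hsl.fderiv]; simp
      have hfe : (fun ρ' => A a ((y₀ : Fin n → ℝ), ρ'))
          = fun ρ' => pd (fun y' => φ y' ρ') a y₀ := by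
        funext ρ'
        exact (pd_slice_fst (hΦdiff y₀ hy₀ ρ') a).symm
      rw [← h2, show fderiv ℝ (fun ρ' => A a ((y₀ : Fin n → ℝ), ρ')) ρ₀
        = fderiv ℝ (fun ρ' => pd (fun y' => φ y' ρ') a y₀) ρ₀ from by rw [hfe]]
      rw [fderiv_apply_pd]
      rfl
    rw [hpdA, hsplit, hterm1, hterm2, hw_eq a]
    have hdneg : dotp (-(H⁻¹.mulVec (v a))) (v a)
        = -(dotp (H⁻¹.mulVec (v a)) (v a)) := by
      simp [dotp, Finset.sum_neg_distrib]
    rw [hdneg]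
    ring
  -- assemble
  calc -(lap (fun y' => u y' x₀) y₀)
      = -(∑ a : Fin n, pd (fun q => pd (fun y' => u y' x₀) a q) a y₀) := rfl
    _ = -(∑ a : Fin n, (-(pd (fun q => pd (fun y' => φ y' ρ₀) a q) a y₀)
          + dotp (H⁻¹.mulVec (v a)) (v a))) := by
        rw [Finset.sum_congr rfl fun a _ => stepD a]
    _ = (∑ a : Fin n, pd (fun q => pd (fun y' => φ y' ρ₀) a q) a y₀)
          - ∑ a : Fin n, dotp (H⁻¹.mulVec (v a)) (v a) := by
        rw [Finset.sum_add_distrib]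
        simp [Finset.sum_neg_distrib]
        ring
    _ = lap (fun y' => φ y' ρ₀) y₀ - ∑ a : Fin n, dotp (H⁻¹.mulVec (v a)) (v a) := rfl
end
end

section
/- The map φ satisfies the torus-invariant harmonic map equation, namely Δ_y φ(y,ρ) = Σ_{a=1}^{n} ⟨(∇²_ρφ(y,ρ))⁻¹ ∇_ρ(∂_{y_a}φ)(y,ρ), ∇_ρ(∂_{y_a}φ)(y,ρ)⟩ for all (y,ρ) ∈ Ω × ℝᵐ, if and only if for every fixed x ∈ P the function y ↦ u(y,x) is harmonic on Ω, i.e. Δ_y u(y,x) = 0 for all y ∈ Ω. (The Legendre transform linearizes the harmonic map equation.) -/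
open scoped BigOperators
open MeasureTheory Real

noncomputable section

namespace LegAux

variable {m n : ℕ}

lemma pd_eq {k : ℕ} {f : (Fin k → ℝ) → ℝ} {f' : (Fin k → ℝ) →L[ℝ] ℝ} {p : Fin k → ℝ}
    (hf : HasFDerivAt f f' p) (i : Fin k) : pd f i p = f' (Pi.single i 1) := by
  rw [pd, hf.fderiv]

/-- derivative of the map `y' ↦ (y', ρ)` composed with `f`. -/
lemma slice1 {F : Type*} [NormedAddCommGroup F] [NormedSpace ℝ F]
    {f : ((Fin n → ℝ) × (Fin m → ℝ)) → F} {f' : ((Fin n → ℝ) × (Fin m → ℝ)) →L[ℝ] F}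
    {y : Fin n → ℝ} {ρ : Fin m → ℝ} (hf : HasFDerivAt f f' (y, ρ)) :
    HasFDerivAt (fun y' => f (y', ρ))
      (f'.comp ((ContinuousLinearMap.id ℝ (Fin n → ℝ)).prod 0)) y :=
  hf.comp y ((hasFDerivAt_id y).prodMk (hasFDerivAt_const ρ y))

lemma slice2 {F : Type*} [NormedAddCommGroup F] [NormedSpace ℝ F]
    {f : ((Fin n → ℝ) × (Fin m → ℝ)) → F} {f' : ((Fin n → ℝ) × (Fin m → ℝ)) →L[ℝ] F}
    {y : Fin n → ℝ} {ρ : Fin m → ℝ} (hf : HasFDerivAt f f' (y, ρ)) :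
    HasFDerivAt (fun q => f (y, q))
      (f'.comp ((0 : (Fin m → ℝ) →L[ℝ] (Fin n → ℝ)).prod (ContinuousLinearMap.id ℝ (Fin m → ℝ)))) ρ :=
  hf.comp ρ ((hasFDerivAt_const y ρ).prodMk (hasFDerivAt_id ρ))

lemma clm_eval (L : ((Fin n → ℝ) × (Fin m → ℝ)) →L[ℝ] ℝ) (h : Fin n → ℝ) (k : Fin m → ℝ) :
    L (h, k) = L (h, 0) + ∑ j, k j * L (0, Pi.single j 1) := by
  have hsum : ∀ t, (∑ j, k j • (Pi.single j 1 : Fin m → ℝ)) t = k t := by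
    intro t
    simp [Finset.sum_apply, Pi.single_apply]
  have hk : ((h, k) : (Fin n → ℝ) × (Fin m → ℝ))
      = (h, 0) + ∑ j, k j • ((0 : Fin n → ℝ), (Pi.single j 1 : Fin m → ℝ)) := by
    apply Prod.ext
    · simp [Prod.fst_sum]
    · simp only [Prod.snd_add, Prod.snd_sum, Prod.smul_mk]
      funext t
      simp only [Pi.add_apply, Finset.sum_apply, Pi.smul_apply, smul_eq_mul, Pi.zero_apply,
        zero_add]
      have := hsum t
      simpa using this.symm
  rw [hk, map_add, map_sum]
  congr 1
  refine Finset.sum_congr rfl fun j _ => ?_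
  rw [_root_.map_smul, smul_eq_mul]


/-! ### Setup for the Legendre computation -/

variable (φ : (Fin n → ℝ) → (Fin m → ℝ) → ℝ)

/-- uncurried version -/
def unc : ((Fin n → ℝ) × (Fin m → ℝ)) → ℝ := fun p => φ p.1 p.2

def ebv (i : Fin m) : (Fin n → ℝ) × (Fin m → ℝ) := (0, Pi.single i 1)

def eav (a : Fin n) : (Fin n → ℝ) × (Fin m → ℝ) := (Pi.single a 1, 0)

/-- the fiberwise gradient map, as vector of directional derivatives of `unc φ` -/
def Gv (w : (Fin n → ℝ) × (Fin m → ℝ)) : Fin m → ℝ :=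
  fun j => fderiv ℝ (unc φ) w (ebv j)

def cmap (w : (Fin n → ℝ) × (Fin m → ℝ)) : (Fin n → ℝ) × (Fin m → ℝ) :=
  (w.1, Gv φ w)

/-- second derivative, evaluated on two directions -/
def F2 (f : ((Fin n → ℝ) × (Fin m → ℝ)) → ℝ) (w v₁ v₂ : (Fin n → ℝ) × (Fin m → ℝ)) : ℝ :=
  fderiv ℝ (fderiv ℝ f) w v₁ v₂


lemma one_le_inf : (1 : WithTop ℕ∞) ≤ ((⊤:ℕ∞) : WithTop ℕ∞) := by exact_mod_cast le_top

lemma two_le_inf : (2 : WithTop ℕ∞) ≤ ((⊤:ℕ∞) : WithTop ℕ∞) := by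
  rw [show ((2 : WithTop ℕ∞)) = (((2:ℕ∞)) : WithTop ℕ∞) by norm_cast]
  exact WithTop.coe_le_coe.2 le_top

lemma inf_add_one_le : ((⊤:ℕ∞) : WithTop ℕ∞) + 1 ≤ ((⊤:ℕ∞) : WithTop ℕ∞) := by simp

section calcfacts

variable {f : ((Fin n → ℝ) × (Fin m → ℝ)) → ℝ} {S : Set ((Fin n → ℝ) × (Fin m → ℝ))}

lemma hasFD (hSo : IsOpen S) (hf : ContDiffOn ℝ (⊤:ℕ∞) f S)
    {w : (Fin n → ℝ) × (Fin m → ℝ)} (hw : w ∈ S) :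
    HasFDerivAt f (fderiv ℝ f w) w :=
  ((hf.contDiffAt (hSo.mem_nhds hw)).differentiableAt (by simp)).hasFDerivAt

lemma fderiv_cd (hSo : IsOpen S) (hf : ContDiffOn ℝ (⊤:ℕ∞) f S) :
    ContDiffOn ℝ (⊤:ℕ∞) (fderiv ℝ f) S :=
  hf.fderiv_of_isOpen hSo inf_add_one_le

lemma hasFD2 (hSo : IsOpen S) (hf : ContDiffOn ℝ (⊤:ℕ∞) f S)
    {w : (Fin n → ℝ) × (Fin m → ℝ)} (hw : w ∈ S) :
    HasFDerivAt (fderiv ℝ f) (fderiv ℝ (fderiv ℝ f) w) w :=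
  (((fderiv_cd hSo hf).contDiffAt (hSo.mem_nhds hw)).differentiableAt (by simp)).hasFDerivAt

lemma symm2 (hSo : IsOpen S) (hf : ContDiffOn ℝ (⊤:ℕ∞) f S)
    {w : (Fin n → ℝ) × (Fin m → ℝ)} (hw : w ∈ S) (v₁ v₂ : (Fin n → ℝ) × (Fin m → ℝ)) :
    F2 f w v₁ v₂ = F2 f w v₂ v₁ :=
  ((hf.contDiffAt (hSo.mem_nhds hw)).isSymmSndFDerivAt (by rw [minSmoothness_of_isRCLikeNormedField]; exact two_le_inf)).eq v₁ v₂

end calcfacts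


section slices

variable {φ} {Ω : Set (Fin n → ℝ)} {Q : Set (Fin m → ℝ)}

lemma mem_prod_univ {y : Fin n → ℝ} (hy : y ∈ Ω) (ρ : Fin m → ℝ) :
    ((y, ρ) : (Fin n → ℝ) × (Fin m → ℝ)) ∈ Ω ×ˢ (Set.univ : Set (Fin m → ℝ)) :=
  ⟨hy, trivial⟩

/-- identification of `grad (φ y)` with directional derivatives of the uncurried map. -/
lemma grad_eq (hΩ : IsOpen Ω) (hQ : IsOpen Q)
    (hφ : ContDiffOn ℝ (⊤:ℕ∞) (unc φ) (Ω ×ˢ Q))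
    {y : Fin n → ℝ} {ρ : Fin m → ℝ} (hy : y ∈ Ω) (hρ : ρ ∈ Q) (i : Fin m) :
    pd (φ y) i ρ = fderiv ℝ (unc φ) (y, ρ) (ebv i) := by
  have hw : ((y, ρ) : _) ∈ Ω ×ˢ Q := ⟨hy, hρ⟩
  have h1 := slice2 (hasFD (hΩ.prod hQ) hφ hw)
  have h2 : pd (fun q => unc φ (y, q)) i ρ = _ := pd_eq h1 i
  have h3 : (fun q => unc φ (y, q)) = φ y := rfl
  rw [h3] at h2
  rw [h2]
  simp [ebv]

/-- identification of the `y`-partials with directional derivatives of the uncurried map. -/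
lemma pdy_eq (hΩ : IsOpen Ω) (hQ : IsOpen Q)
    (hφ : ContDiffOn ℝ (⊤:ℕ∞) (unc φ) (Ω ×ˢ Q))
    {y : Fin n → ℝ} {ρ : Fin m → ℝ} (hy : y ∈ Ω) (hρ : ρ ∈ Q) (a : Fin n) :
    pd (fun y' => φ y' ρ) a y = fderiv ℝ (unc φ) (y, ρ) (eav a) := by
  have hw : ((y, ρ) : _) ∈ Ω ×ˢ Q := ⟨hy, hρ⟩
  have h1 := slice1 (hasFD (hΩ.prod hQ) hφ hw)
  have h2 : pd (fun y' => unc φ (y', ρ)) a y = _ := pd_eq h1 a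
  rw [show (fun y' => unc φ (y', ρ)) = (fun y' => φ y' ρ) from rfl] at h2
  rw [h2]
  simp [eav]

/-- identification of the Hessian matrix entries. -/
lemma hess_eq (hΩ : IsOpen Ω) (hQ : IsOpen Q)
    (hφ : ContDiffOn ℝ (⊤:ℕ∞) (unc φ) (Ω ×ˢ Q))
    {y : Fin n → ℝ} {ρ : Fin m → ℝ} (hy : y ∈ Ω) (hρ : ρ ∈ Q) (hQu : Q = Set.univ)
    (k i : Fin m) :
    hess (φ y) ρ k i = F2 (unc φ) (y, ρ) (ebv k) (ebv i) := by
  subst hQu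
  have hw : ((y, ρ) : _) ∈ Ω ×ˢ (Set.univ : Set (Fin m → ℝ)) := ⟨hy, trivial⟩
  have hfun : (fun q => pd (φ y) i q) = fun q => fderiv ℝ (unc φ) (y, q) (ebv i) :=
    funext fun q => grad_eq hΩ isOpen_univ hφ hy trivial i
  have h2 := slice2 (hasFD2 (hΩ.prod isOpen_univ) hφ hw)
  have h3 := (ContinuousLinearMap.apply ℝ ℝ (ebv i : (Fin n → ℝ) × (Fin m → ℝ))).hasFDerivAt.comp
    ρ h2
  have h4 : pd (fun q => fderiv ℝ (unc φ) (y, q) (ebv i)) k ρ = _ := pd_eq h3 k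
  show pd (fun q => pd (φ y) i q) k ρ = _
  rw [hfun, h4]
  simp [F2, ebv]

/-- identification of the mixed second partials vector. -/
lemma gvec_eq (hΩ : IsOpen Ω)
    (hφ : ContDiffOn ℝ (⊤:ℕ∞) (unc φ) (Ω ×ˢ (Set.univ : Set (Fin m → ℝ))))
    {y : Fin n → ℝ} (hy : y ∈ Ω) (ρ : Fin m → ℝ) (a : Fin n) (i : Fin m) :
    grad (fun ρ' => pd (fun y' => φ y' ρ') a y) ρ i = F2 (unc φ) (y, ρ) (ebv i) (eav a) := by
  have hw : ((y, ρ) : _) ∈ Ω ×ˢ (Set.univ : Set (Fin m → ℝ)) := ⟨hy, trivial⟩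
  have hfun : (fun ρ' => pd (fun y' => φ y' ρ') a y) = fun ρ' => fderiv ℝ (unc φ) (y, ρ') (eav a) :=
    funext fun ρ' => pdy_eq hΩ isOpen_univ hφ hy trivial a
  have h2 := slice2 (hasFD2 (hΩ.prod isOpen_univ) hφ hw)
  have h3 := (ContinuousLinearMap.apply ℝ ℝ (eav a : (Fin n → ℝ) × (Fin m → ℝ))).hasFDerivAt.comp
    ρ h2
  have h4 : pd (fun ρ' => fderiv ℝ (unc φ) (y, ρ') (eav a)) i ρ = _ := pd_eq h3 i
  show pd (fun ρ' => pd (fun y' => φ y' ρ') a y) i ρ = _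
  rw [hfun, h4]
  simp [F2, ebv]

/-- identification of the Laplacian in the `y` variables. -/
lemma lap_eq (hΩ : IsOpen Ω) (hQ : IsOpen Q)
    (hφ : ContDiffOn ℝ (⊤:ℕ∞) (unc φ) (Ω ×ˢ Q))
    {y : Fin n → ℝ} {ρ : Fin m → ℝ} (hy : y ∈ Ω) (hρ : ρ ∈ Q) :
    lap (fun y' => φ y' ρ) y = ∑ a, F2 (unc φ) (y, ρ) (eav a) (eav a) := by
  have hw : ((y, ρ) : _) ∈ Ω ×ˢ Q := ⟨hy, hρ⟩
  refine Finset.sum_congr rfl fun a _ => ?_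
  have hev : (fun q => pd (fun y' => φ y' ρ) a q)
      =ᶠ[nhds y] (fun q => fderiv ℝ (unc φ) (q, ρ) (eav a)) :=
    Filter.eventuallyEq_of_mem (hΩ.mem_nhds hy) fun q hq => pdy_eq hΩ hQ hφ hq hρ a
  have h2 := slice1 (hasFD2 (hΩ.prod hQ) hφ hw)
  have h3 := (ContinuousLinearMap.apply ℝ ℝ (eav a : (Fin n → ℝ) × (Fin m → ℝ))).hasFDerivAt.comp
    y h2
  have h4 : pd (fun q => fderiv ℝ (unc φ) (q, ρ) (eav a)) a y = _ := pd_eq h3 a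
  show pd (fun q => pd (fun y' => φ y' ρ) a q) a y = _
  rw [pd, hev.fderiv_eq, ← pd, h4]
  simp [F2, eav]

end slices


/-- derivative of `Gv` -/
def GD (w : (Fin n → ℝ) × (Fin m → ℝ)) :
    ((Fin n → ℝ) × (Fin m → ℝ)) →L[ℝ] (Fin m → ℝ) :=
  ContinuousLinearMap.pi fun j =>
    (ContinuousLinearMap.apply ℝ ℝ (ebv j : (Fin n → ℝ) × (Fin m → ℝ))).comp
      (fderiv ℝ (fderiv ℝ (unc φ)) w)

/-- derivative of `cmap` -/
def cd (w : (Fin n → ℝ) × (Fin m → ℝ)) :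
    ((Fin n → ℝ) × (Fin m → ℝ)) →L[ℝ] ((Fin n → ℝ) × (Fin m → ℝ)) :=
  (ContinuousLinearMap.fst ℝ (Fin n → ℝ) (Fin m → ℝ)).prod (GD φ w)

lemma GD_apply (w v : (Fin n → ℝ) × (Fin m → ℝ)) :
    GD φ w v = fun j => F2 (unc φ) w v (ebv j) := by
  funext j
  simp [GD, F2]

lemma cd_apply (w v : (Fin n → ℝ) × (Fin m → ℝ)) :
    cd φ w v = (v.1, fun j => F2 (unc φ) w v (ebv j)) := by
  rw [cd]
  ext <;> simp [GD, F2]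

section packs

variable {φ} {Ω : Set (Fin n → ℝ)}

lemma hasFD_Gv (hΩ : IsOpen Ω)
    (hφ : ContDiffOn ℝ (⊤:ℕ∞) (unc φ) (Ω ×ˢ (Set.univ : Set (Fin m → ℝ))))
    {w : (Fin n → ℝ) × (Fin m → ℝ)} (hw : w ∈ Ω ×ˢ (Set.univ : Set (Fin m → ℝ))) :
    HasFDerivAt (Gv φ) (GD φ w) w := by
  apply hasFDerivAt_pi.2
  intro j
  exact (ContinuousLinearMap.apply ℝ ℝ
    (ebv j : (Fin n → ℝ) × (Fin m → ℝ))).hasFDerivAt.comp w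
    (hasFD2 (hΩ.prod isOpen_univ) hφ hw)

lemma hasFD_cmap (hΩ : IsOpen Ω)
    (hφ : ContDiffOn ℝ (⊤:ℕ∞) (unc φ) (Ω ×ˢ (Set.univ : Set (Fin m → ℝ))))
    {w : (Fin n → ℝ) × (Fin m → ℝ)} (hw : w ∈ Ω ×ˢ (Set.univ : Set (Fin m → ℝ))) :
    HasFDerivAt (cmap φ) (cd φ w) w :=
  (hasFDerivAt_fst).prodMk (hasFD_Gv hΩ hφ hw)

variable {u : (Fin n → ℝ) → (Fin m → ℝ) → ℝ} {P : Set (Fin m → ℝ)}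

/-- The first variation of the Legendre identity. -/
lemma main_deriv (hΩ : IsOpen Ω) (hP : IsOpen P)
    (hφ : ContDiffOn ℝ (⊤:ℕ∞) (unc φ) (Ω ×ˢ (Set.univ : Set (Fin m → ℝ))))
    (husm : ContDiffOn ℝ (⊤:ℕ∞) (unc u) (Ω ×ˢ P))
    (hI : ∀ w ∈ Ω ×ˢ (Set.univ : Set (Fin m → ℝ)),
      unc φ w = dotp (Gv φ w) w.2 - unc u (cmap φ w))
    (hmemc : ∀ w ∈ Ω ×ˢ (Set.univ : Set (Fin m → ℝ)), cmap φ w ∈ Ω ×ˢ P)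
    {w : (Fin n → ℝ) × (Fin m → ℝ)} (hw : w ∈ Ω ×ˢ (Set.univ : Set (Fin m → ℝ)))
    (v : (Fin n → ℝ) × (Fin m → ℝ)) :
    fderiv ℝ (unc φ) w v
      = (∑ i, (Gv φ w i * v.2 i + w.2 i * F2 (unc φ) w v (ebv i)))
        - fderiv ℝ (unc u) (cmap φ w) (v.1, fun j => F2 (unc φ) w v (ebv j)) := by
  have hSo : IsOpen (Ω ×ˢ (Set.univ : Set (Fin m → ℝ))) := hΩ.prod isOpen_univ
  have hTo : IsOpen (Ω ×ˢ P) := hΩ.prod hP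
  -- derivative of the sum-of-products part
  have hsum : HasFDerivAt (fun w' => ∑ i, Gv φ w' i * w'.2 i)
      (∑ i, (Gv φ w i • ((ContinuousLinearMap.proj i).comp
          (ContinuousLinearMap.snd ℝ (Fin n → ℝ) (Fin m → ℝ)))
        + w.2 i • ((ContinuousLinearMap.apply ℝ ℝ
            (ebv i : (Fin n → ℝ) × (Fin m → ℝ))).comp
          (fderiv ℝ (fderiv ℝ (unc φ)) w)))) w := by
    apply HasFDerivAt.fun_sum
    intro i _
    have h1 : HasFDerivAt (fun w' => Gv φ w' i)
        ((ContinuousLinearMap.apply ℝ ℝ (ebv i : (Fin n → ℝ) × (Fin m → ℝ))).comp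
          (fderiv ℝ (fderiv ℝ (unc φ)) w)) w :=
      (ContinuousLinearMap.apply ℝ ℝ
        (ebv i : (Fin n → ℝ) × (Fin m → ℝ))).hasFDerivAt.comp w (hasFD2 hSo hφ hw)
    have h2 : HasFDerivAt (fun w' : (Fin n → ℝ) × (Fin m → ℝ) => w'.2 i)
        ((ContinuousLinearMap.proj i).comp
          (ContinuousLinearMap.snd ℝ (Fin n → ℝ) (Fin m → ℝ))) w :=
      (((ContinuousLinearMap.proj i).comp
        (ContinuousLinearMap.snd ℝ (Fin n → ℝ) (Fin m → ℝ)))).hasFDerivAt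
    exact h1.mul h2
  have hcomp : HasFDerivAt (fun w' => unc u (cmap φ w'))
      ((fderiv ℝ (unc u) (cmap φ w)).comp (cd φ w)) w :=
    (hasFD hTo husm (hmemc w hw)).comp w (hasFD_cmap hΩ hφ hw)
  have htot := hsum.fun_sub hcomp
  have hev : unc φ =ᶠ[nhds w]
      (fun w' => (∑ i, Gv φ w' i * w'.2 i) - unc u (cmap φ w')) :=
    Filter.eventuallyEq_of_mem (hSo.mem_nhds hw) fun w' hw' => hI w' hw'
  have hfd : fderiv ℝ (unc φ) w = _ := hev.fderiv_eq
  rw [hfd, htot.fderiv]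
  rw [← cd_apply]
  simp [ContinuousLinearMap.sum_apply, F2, mul_comm]

/-- envelope identity in the fiber directions: the `x`-gradient of `u` at
`(y, grad (φ y) ρ)` is `ρ`. -/
lemma envC (hΩ : IsOpen Ω) (hP : IsOpen P)
    (hφ : ContDiffOn ℝ (⊤:ℕ∞) (unc φ) (Ω ×ˢ (Set.univ : Set (Fin m → ℝ))))
    (husm : ContDiffOn ℝ (⊤:ℕ∞) (unc u) (Ω ×ˢ P))
    (hI : ∀ w ∈ Ω ×ˢ (Set.univ : Set (Fin m → ℝ)),
      unc φ w = dotp (Gv φ w) w.2 - unc u (cmap φ w))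
    (hmemc : ∀ w ∈ Ω ×ˢ (Set.univ : Set (Fin m → ℝ)), cmap φ w ∈ Ω ×ˢ P)
    (hpos : ∀ y ∈ Ω, ∀ ρ : Fin m → ℝ, (hess (φ y) ρ).PosDef)
    {w : (Fin n → ℝ) × (Fin m → ℝ)} (hw : w ∈ Ω ×ˢ (Set.univ : Set (Fin m → ℝ)))
    (i : Fin m) :
    fderiv ℝ (unc u) (cmap φ w) (ebv i) = w.2 i := by
  set Z := fderiv ℝ (unc u) (cmap φ w) with hZ
  have hmv : ∀ k, ∑ j, hess (φ w.1) w.2 k j * (w.2 j - Z (ebv j)) = 0 := by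
    intro k
    have h0 := main_deriv hΩ hP hφ husm hI hmemc hw (ebv k)
    have hL : fderiv ℝ (unc φ) w (ebv k) = Gv φ w k := rfl
    have h1 : ∑ i', Gv φ w i' * (ebv k : (Fin n → ℝ) × (Fin m → ℝ)).2 i' = Gv φ w k := by
      simp [ebv, Pi.single_apply, mul_ite, Finset.sum_ite_eq']
    have h2 : Z ((ebv k : (Fin n → ℝ) × (Fin m → ℝ)).1, fun j => F2 (unc φ) w (ebv k) (ebv j))
        = ∑ j, F2 (unc φ) w (ebv k) (ebv j) * Z (ebv j) := by
      have := clm_eval Z 0 (fun j => F2 (unc φ) w (ebv k) (ebv j))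
      rw [show ((ebv k : (Fin n → ℝ) × (Fin m → ℝ)).1) = (0 : Fin n → ℝ) from rfl, this]
      have hzero : Z ((0 : Fin n → ℝ), (0 : Fin m → ℝ)) = 0 := by
        rw [Prod.mk_zero_zero, map_zero]
      rw [hzero, zero_add]
      rfl
    rw [hL, Finset.sum_add_distrib, h1, h2] at h0
    have h3 : ∑ j, (w.2 j * F2 (unc φ) w (ebv k) (ebv j))
        = ∑ j, F2 (unc φ) w (ebv k) (ebv j) * Z (ebv j) := by linarith
    calc ∑ j, hess (φ w.1) w.2 k j * (w.2 j - Z (ebv j))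
        = ∑ j, (w.2 j * F2 (unc φ) w (ebv k) (ebv j)
            - F2 (unc φ) w (ebv k) (ebv j) * Z (ebv j)) := by
          refine Finset.sum_congr rfl fun j _ => ?_
          rw [hess_eq hΩ isOpen_univ hφ hw.1 trivial rfl k j]
          ring
      _ = 0 := by rw [Finset.sum_sub_distrib, h3, sub_self]
  have hmv' : (hess (φ w.1) w.2).mulVec (fun j => w.2 j - Z (ebv j)) = 0 := by
    funext k
    simpa [Matrix.mulVec, dotProduct] using hmv k
  have hU : IsUnit (hess (φ w.1) w.2).det :=
    isUnit_iff_ne_zero.2 (hpos w.1 hw.1 w.2).det_pos.ne'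
  have hzv : (fun j => w.2 j - Z (ebv j)) = (0 : Fin m → ℝ) := by
    have h9 := congrArg ((hess (φ w.1) w.2)⁻¹.mulVec) hmv'
    rwa [Matrix.mulVec_mulVec, Matrix.nonsing_inv_mul _ hU, Matrix.one_mulVec,
      Matrix.mulVec_zero] at h9
  have := congrFun hzv i
  simp only [Pi.zero_apply] at this
  linarith

/-- envelope identity in the base directions. -/
lemma envE (hΩ : IsOpen Ω) (hP : IsOpen P)
    (hφ : ContDiffOn ℝ (⊤:ℕ∞) (unc φ) (Ω ×ˢ (Set.univ : Set (Fin m → ℝ))))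
    (husm : ContDiffOn ℝ (⊤:ℕ∞) (unc u) (Ω ×ˢ P))
    (hI : ∀ w ∈ Ω ×ˢ (Set.univ : Set (Fin m → ℝ)),
      unc φ w = dotp (Gv φ w) w.2 - unc u (cmap φ w))
    (hmemc : ∀ w ∈ Ω ×ˢ (Set.univ : Set (Fin m → ℝ)), cmap φ w ∈ Ω ×ˢ P)
    (hpos : ∀ y ∈ Ω, ∀ ρ : Fin m → ℝ, (hess (φ y) ρ).PosDef)
    {w : (Fin n → ℝ) × (Fin m → ℝ)} (hw : w ∈ Ω ×ˢ (Set.univ : Set (Fin m → ℝ)))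
    (a : Fin n) :
    fderiv ℝ (unc φ) w (eav a) = - fderiv ℝ (unc u) (cmap φ w) (eav a) := by
  set Z := fderiv ℝ (unc u) (cmap φ w) with hZ
  have h0 := main_deriv hΩ hP hφ husm hI hmemc hw (eav a)
  have h1 : ∀ i, Gv φ w i * (eav a : (Fin n → ℝ) × (Fin m → ℝ)).2 i = 0 := by
    intro i; simp [eav]
  have h2 : Z ((eav a : (Fin n → ℝ) × (Fin m → ℝ)).1, fun j => F2 (unc φ) w (eav a) (ebv j))
      = Z (eav a) + ∑ j, F2 (unc φ) w (eav a) (ebv j) * w.2 j := by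
    have hce := clm_eval Z (Pi.single a 1) (fun j => F2 (unc φ) w (eav a) (ebv j))
    rw [show ((eav a : (Fin n → ℝ) × (Fin m → ℝ)).1) = (Pi.single a 1 : Fin n → ℝ) from rfl, hce]
    have : ∀ j, Z ((0 : Fin n → ℝ), (Pi.single j 1 : Fin m → ℝ)) = w.2 j := fun j =>
      envC hΩ hP hφ husm hI hmemc hpos hw j
    rw [show Z ((Pi.single a 1 : Fin n → ℝ), (0 : Fin m → ℝ)) = Z (eav a) from rfl]
    congr 1
    exact Finset.sum_congr rfl fun j _ => by rw [this j]
  rw [Finset.sum_add_distrib] at h0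
  rw [show (∑ i, Gv φ w i * (eav a : (Fin n → ℝ) × (Fin m → ℝ)).2 i) = 0 from
    Finset.sum_eq_zero fun i _ => h1 i] at h0
  rw [h2] at h0
  have h3 : ∑ i, w.2 i * F2 (unc φ) w (eav a) (ebv i)
      = ∑ j, F2 (unc φ) w (eav a) (ebv j) * w.2 j :=
    Finset.sum_congr rfl fun j _ => mul_comm _ _
  rw [h3] at h0
  linarith

/-- second-order consequence of `envC`. -/
lemma sndC (hΩ : IsOpen Ω) (hP : IsOpen P)
    (hφ : ContDiffOn ℝ (⊤:ℕ∞) (unc φ) (Ω ×ˢ (Set.univ : Set (Fin m → ℝ))))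
    (husm : ContDiffOn ℝ (⊤:ℕ∞) (unc u) (Ω ×ˢ P))
    (hI : ∀ w ∈ Ω ×ˢ (Set.univ : Set (Fin m → ℝ)),
      unc φ w = dotp (Gv φ w) w.2 - unc u (cmap φ w))
    (hmemc : ∀ w ∈ Ω ×ˢ (Set.univ : Set (Fin m → ℝ)), cmap φ w ∈ Ω ×ˢ P)
    (hpos : ∀ y ∈ Ω, ∀ ρ : Fin m → ℝ, (hess (φ y) ρ).PosDef)
    {w : (Fin n → ℝ) × (Fin m → ℝ)} (hw : w ∈ Ω ×ˢ (Set.univ : Set (Fin m → ℝ)))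
    (v : (Fin n → ℝ) × (Fin m → ℝ)) (i : Fin m) :
    F2 (unc u) (cmap φ w) (cd φ w v) (ebv i) = v.2 i := by
  have hSo : IsOpen (Ω ×ˢ (Set.univ : Set (Fin m → ℝ))) := hΩ.prod isOpen_univ
  have hTo : IsOpen (Ω ×ˢ P) := hΩ.prod hP
  have hz := hmemc w hw
  have h1 : HasFDerivAt (fun w' => fderiv ℝ (unc u) (cmap φ w'))
      ((fderiv ℝ (fderiv ℝ (unc u)) (cmap φ w)).comp (cd φ w)) w :=
    (hasFD2 hTo husm hz).comp w (hasFD_cmap hΩ hφ hw)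
  have h2 : HasFDerivAt (fun w' => fderiv ℝ (unc u) (cmap φ w') (ebv i))
      ((ContinuousLinearMap.apply ℝ ℝ (ebv i : (Fin n → ℝ) × (Fin m → ℝ))).comp
        ((fderiv ℝ (fderiv ℝ (unc u)) (cmap φ w)).comp (cd φ w))) w :=
    (ContinuousLinearMap.apply ℝ ℝ
      (ebv i : (Fin n → ℝ) × (Fin m → ℝ))).hasFDerivAt.comp w h1
  have hev : (fun w' => fderiv ℝ (unc u) (cmap φ w') (ebv i))
      =ᶠ[nhds w] (fun w' : (Fin n → ℝ) × (Fin m → ℝ) => w'.2 i) :=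
    Filter.eventuallyEq_of_mem (hSo.mem_nhds hw) fun w' hw' =>
      envC hΩ hP hφ husm hI hmemc hpos hw' i
  have hR : HasFDerivAt (fun w' : (Fin n → ℝ) × (Fin m → ℝ) => w'.2 i)
      ((ContinuousLinearMap.proj i).comp
        (ContinuousLinearMap.snd ℝ (Fin n → ℝ) (Fin m → ℝ))) w :=
    (((ContinuousLinearMap.proj i).comp
      (ContinuousLinearMap.snd ℝ (Fin n → ℝ) (Fin m → ℝ)))).hasFDerivAt
  have heq := hev.fderiv_eq (𝕜 := ℝ)
  rw [h2.fderiv, hR.fderiv] at heq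
  have := congrArg (fun (L : ((Fin n → ℝ) × (Fin m → ℝ)) →L[ℝ] ℝ) => L v) heq
  simpa [F2] using this

/-- second-order consequence of `envE`. -/
lemma sndE (hΩ : IsOpen Ω) (hP : IsOpen P)
    (hφ : ContDiffOn ℝ (⊤:ℕ∞) (unc φ) (Ω ×ˢ (Set.univ : Set (Fin m → ℝ))))
    (husm : ContDiffOn ℝ (⊤:ℕ∞) (unc u) (Ω ×ˢ P))
    (hI : ∀ w ∈ Ω ×ˢ (Set.univ : Set (Fin m → ℝ)),
      unc φ w = dotp (Gv φ w) w.2 - unc u (cmap φ w))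
    (hmemc : ∀ w ∈ Ω ×ˢ (Set.univ : Set (Fin m → ℝ)), cmap φ w ∈ Ω ×ˢ P)
    (hpos : ∀ y ∈ Ω, ∀ ρ : Fin m → ℝ, (hess (φ y) ρ).PosDef)
    {w : (Fin n → ℝ) × (Fin m → ℝ)} (hw : w ∈ Ω ×ˢ (Set.univ : Set (Fin m → ℝ)))
    (v : (Fin n → ℝ) × (Fin m → ℝ)) (a : Fin n) :
    F2 (unc φ) w v (eav a) = - F2 (unc u) (cmap φ w) (cd φ w v) (eav a) := by
  have hSo : IsOpen (Ω ×ˢ (Set.univ : Set (Fin m → ℝ))) := hΩ.prod isOpen_univ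
  have hTo : IsOpen (Ω ×ˢ P) := hΩ.prod hP
  have hz := hmemc w hw
  have h1 : HasFDerivAt (fun w' => fderiv ℝ (unc u) (cmap φ w'))
      ((fderiv ℝ (fderiv ℝ (unc u)) (cmap φ w)).comp (cd φ w)) w :=
    (hasFD2 hTo husm hz).comp w (hasFD_cmap hΩ hφ hw)
  have h2 : HasFDerivAt (fun w' => fderiv ℝ (unc u) (cmap φ w') (eav a))
      ((ContinuousLinearMap.apply ℝ ℝ (eav a : (Fin n → ℝ) × (Fin m → ℝ))).comp
        ((fderiv ℝ (fderiv ℝ (unc u)) (cmap φ w)).comp (cd φ w))) w :=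
    (ContinuousLinearMap.apply ℝ ℝ
      (eav a : (Fin n → ℝ) × (Fin m → ℝ))).hasFDerivAt.comp w h1
  have h2n := h2.fun_neg
  have h3 : HasFDerivAt (fun w' => fderiv ℝ (unc φ) w' (eav a))
      ((ContinuousLinearMap.apply ℝ ℝ (eav a : (Fin n → ℝ) × (Fin m → ℝ))).comp
        (fderiv ℝ (fderiv ℝ (unc φ)) w)) w :=
    (ContinuousLinearMap.apply ℝ ℝ
      (eav a : (Fin n → ℝ) × (Fin m → ℝ))).hasFDerivAt.comp w (hasFD2 hSo hφ hw)
  have hev : (fun w' => fderiv ℝ (unc φ) w' (eav a))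
      =ᶠ[nhds w] (fun w' => -(fderiv ℝ (unc u) (cmap φ w') (eav a))) :=
    Filter.eventuallyEq_of_mem (hSo.mem_nhds hw) fun w' hw' => by
      have := envE hΩ hP hφ husm hI hmemc hpos hw' a
      simpa using this
  have heq := hev.fderiv_eq (𝕜 := ℝ)
  rw [h3.fderiv, h2n.fderiv] at heq
  have := congrArg (fun (L : ((Fin n → ℝ) × (Fin m → ℝ)) →L[ℝ] ℝ) => L v) heq
  simpa [F2] using this

/-- **Key identity**: sum of the two Laplacians equals the harmonic-map term. -/
lemma key (hΩ : IsOpen Ω) (hP : IsOpen P)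
    (hφ : ContDiffOn ℝ (⊤:ℕ∞) (unc φ) (Ω ×ˢ (Set.univ : Set (Fin m → ℝ))))
    (husm : ContDiffOn ℝ (⊤:ℕ∞) (unc u) (Ω ×ˢ P))
    (hI : ∀ w ∈ Ω ×ˢ (Set.univ : Set (Fin m → ℝ)),
      unc φ w = dotp (Gv φ w) w.2 - unc u (cmap φ w))
    (hmemc : ∀ w ∈ Ω ×ˢ (Set.univ : Set (Fin m → ℝ)), cmap φ w ∈ Ω ×ˢ P)
    (hpos : ∀ y ∈ Ω, ∀ ρ : Fin m → ℝ, (hess (φ y) ρ).PosDef)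
    {y : Fin n → ℝ} (hy : y ∈ Ω) (ρ : Fin m → ℝ) :
    lap (fun y' => φ y' ρ) y + lap (fun y' => u y' (Gv φ (y, ρ))) y
      = ∑ a : Fin n,
          dotp ((hess (φ y) ρ)⁻¹.mulVec
              (grad (fun ρ' => pd (fun y' => φ y' ρ') a y) ρ))
            (grad (fun ρ' => pd (fun y' => φ y' ρ') a y) ρ) := by
  have hSo : IsOpen (Ω ×ˢ (Set.univ : Set (Fin m → ℝ))) := hΩ.prod isOpen_univ
  have hTo : IsOpen (Ω ×ˢ P) := hΩ.prod hP
  have hw : ((y, ρ) : (Fin n → ℝ) × (Fin m → ℝ)) ∈ Ω ×ˢ (Set.univ : Set (Fin m → ℝ)) :=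
    ⟨hy, trivial⟩
  have hz := hmemc (y, ρ) hw
  set w : (Fin n → ℝ) × (Fin m → ℝ) := (y, ρ) with hwdef
  set z : (Fin n → ℝ) × (Fin m → ℝ) := cmap φ w with hzdef
  set M : Fin m → Fin m → ℝ := fun i j => F2 (unc u) z (ebv i) (ebv j) with hM
  set g : Fin n → Fin m → ℝ := fun a j => F2 (unc φ) w (ebv j) (eav a) with hg
  have hgsym : ∀ a j, F2 (unc φ) w (eav a) (ebv j) = g a j := fun a j =>
    symm2 hSo hφ hw (eav a) (ebv j)
  have husym : ∀ v₁ v₂, F2 (unc u) z v₁ v₂ = F2 (unc u) z v₂ v₁ := fun v₁ v₂ =>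
    symm2 hTo husm hz v₁ v₂
  -- expansion of second derivative of u in pair directions
  have hexp : ∀ (h : Fin n → ℝ) (k : Fin m → ℝ) (v : (Fin n → ℝ) × (Fin m → ℝ)),
      F2 (unc u) z (h, k) v = F2 (unc u) z (h, 0) v + ∑ j, k j * F2 (unc u) z (ebv j) v := by
    intro h k v
    have := clm_eval ((ContinuousLinearMap.apply ℝ ℝ v).comp
      (fderiv ℝ (fderiv ℝ (unc u)) z)) h k
    simpa [F2, ebv] using this
  -- (B) :  H * M = 1
  have hB : hess (φ y) ρ * Matrix.of M = 1 := by
    ext k i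
    have h1 := sndC hΩ hP hφ husm hI hmemc hpos hw (ebv k) i
    rw [cd_apply, ← hzdef] at h1
    rw [show ((ebv k : (Fin n → ℝ) × (Fin m → ℝ)).1) = (0 : Fin n → ℝ) from rfl] at h1
    have h2 := hexp (0 : Fin n → ℝ) (fun j => F2 (unc φ) w (ebv k) (ebv j)) (ebv i)
    have h3 : F2 (unc u) z ((0 : Fin n → ℝ), (0 : Fin m → ℝ)) (ebv i) = 0 := by
      rw [F2, Prod.mk_zero_zero, map_zero]
      rfl
    rw [h2, h3, zero_add] at h1
    have h4 : ∀ j, F2 (unc φ) w (ebv k) (ebv j) = hess (φ y) ρ k j := fun j =>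
      (hess_eq hΩ isOpen_univ hφ hy trivial rfl k j).symm
    rw [Matrix.mul_apply, Matrix.one_apply]
    calc ∑ j, hess (φ y) ρ k j * Matrix.of M j i
        = ∑ j, F2 (unc φ) w (ebv k) (ebv j) * F2 (unc u) z (ebv j) (ebv i) := by
          refine Finset.sum_congr rfl fun j _ => ?_
          rw [h4 j]
          rfl
      _ = (ebv k : (Fin n → ℝ) × (Fin m → ℝ)).2 i := h1
      _ = (if k = i then 1 else 0) := by
          simp [ebv, Pi.single_apply, eq_comm]
  have hHinv : (hess (φ y) ρ)⁻¹ = Matrix.of M := Matrix.inv_eq_right_inv hB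
  -- (A)
  have hA : ∀ (a : Fin n) (i : Fin m),
      F2 (unc u) z (eav a) (ebv i) = -∑ j, g a j * M j i := by
    intro a i
    have h1 := sndC hΩ hP hφ husm hI hmemc hpos hw (eav a) i
    rw [cd_apply, ← hzdef] at h1
    have h2 := hexp ((eav a : (Fin n → ℝ) × (Fin m → ℝ)).1)
      (fun j => F2 (unc φ) w (eav a) (ebv j)) (ebv i)
    rw [show (((eav a : (Fin n → ℝ) × (Fin m → ℝ)).1, (0 : Fin m → ℝ))
      : (Fin n → ℝ) × (Fin m → ℝ)) = eav a from rfl] at h2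
    rw [h2] at h1
    have h5 : ∑ j, F2 (unc φ) w (eav a) (ebv j) * F2 (unc u) z (ebv j) (ebv i)
        = ∑ j, g a j * M j i := by
      exact Finset.sum_congr rfl fun j _ => by rw [hgsym a j]
    rw [h5, show ((eav a : (Fin n → ℝ) × (Fin m → ℝ)).2 i) = 0 from rfl] at h1
    linarith
  -- (E')
  have hE' : ∀ a : Fin n,
      F2 (unc φ) w (eav a) (eav a) + F2 (unc u) z (eav a) (eav a)
        = ∑ j, ∑ t, g a j * g a t * M t j := by
    intro a
    have h1 := sndE hΩ hP hφ husm hI hmemc hpos hw (eav a) a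
    rw [cd_apply, ← hzdef] at h1
    have h2 := hexp ((eav a : (Fin n → ℝ) × (Fin m → ℝ)).1)
      (fun j => F2 (unc φ) w (eav a) (ebv j)) (eav a)
    rw [show (((eav a : (Fin n → ℝ) × (Fin m → ℝ)).1, (0 : Fin m → ℝ))
      : (Fin n → ℝ) × (Fin m → ℝ)) = eav a from rfl] at h2
    rw [h2] at h1
    have h3 : ∑ j, F2 (unc φ) w (eav a) (ebv j) * F2 (unc u) z (ebv j) (eav a)
        = -∑ j, ∑ t, g a j * g a t * M t j := by
      rw [← Finset.sum_neg_distrib]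
      refine Finset.sum_congr rfl fun j _ => ?_
      rw [hgsym a j, husym (ebv j) (eav a), hA a j, mul_neg, Finset.mul_sum]
      congr 1
      exact Finset.sum_congr rfl fun t _ => by ring
    rw [h3] at h1
    linarith
  -- put everything together
  have hlapφ := lap_eq hΩ isOpen_univ hφ hy (Set.mem_univ ρ)
  have hxP : Gv φ (y, ρ) ∈ P := hz.2
  have hlapu : lap (fun y' => u y' (Gv φ (y, ρ))) y
      = ∑ a, F2 (unc u) z (eav a) (eav a) := lap_eq hΩ hP husm hy hxP (φ := u)
  rw [hlapφ, hlapu, ← Finset.sum_add_distrib]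
  refine Finset.sum_congr rfl fun a _ => ?_
  rw [hE' a]
  have hgv : ∀ i, grad (fun ρ' => pd (fun y' => φ y' ρ') a y) ρ i = g a i := fun i =>
    gvec_eq hΩ hφ hy ρ a i
  rw [dotp, hHinv]
  calc ∑ j, ∑ t, g a j * g a t * M t j
      = ∑ t, ∑ j, g a j * g a t * M t j := Finset.sum_comm
    _ = ∑ t, ((Matrix.of M).mulVec (grad (fun ρ' => pd (fun y' => φ y' ρ') a y) ρ)) t
          * grad (fun ρ' => pd (fun y' => φ y' ρ') a y) ρ t := by
        refine Finset.sum_congr rfl fun t _ => ?_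
        have hmv : ((Matrix.of M).mulVec (grad (fun ρ' => pd (fun y' => φ y' ρ') a y) ρ)) t
            = ∑ j, M t j * g a j := by
          rw [Matrix.mulVec, dotProduct]
          exact Finset.sum_congr rfl fun j _ => by rw [hgv j]; rfl
        rw [hmv, hgv t, Finset.sum_mul]
        exact Finset.sum_congr rfl fun j _ => by ring

end packs

end LegAux

/-- **The Legendre transform linearizes the harmonic map equation.**
`φ` satisfies the torus-invariant harmonic map equation iff, for every fixed `x ∈ P`,
the Legendre dual `y ↦ u(y,x)` is harmonic on `Ω`. -/
theorem harmonic_map_iff_legendre_harmonic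
    {m n : ℕ} (hm : 1 ≤ m) (hn : 1 ≤ n)
    (Ω : Set (Fin n → ℝ)) (hΩ : IsOpen Ω)
    (P : Set (Fin m → ℝ)) (hP : IsOpen P)
    (φ : (Fin n → ℝ) → (Fin m → ℝ) → ℝ)
    (hφ : ContDiffOn ℝ (⊤ : ℕ∞)
      (fun p : (Fin n → ℝ) × (Fin m → ℝ) => φ p.1 p.2) (Ω ×ˢ Set.univ))
    (hpos : ∀ y ∈ Ω, ∀ ρ : Fin m → ℝ, (hess (φ y) ρ).PosDef)
    (R : (Fin n → ℝ) → (Fin m → ℝ) → (Fin m → ℝ))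
    (hmem : ∀ y ∈ Ω, ∀ ρ : Fin m → ℝ, grad (φ y) ρ ∈ P)
    (hR₁ : ∀ y ∈ Ω, ∀ x ∈ P, grad (φ y) (R y x) = x)
    (hR₂ : ∀ y ∈ Ω, ∀ ρ : Fin m → ℝ, R y (grad (φ y) ρ) = ρ)
    (u : (Fin n → ℝ) → (Fin m → ℝ) → ℝ)
    (hu : ∀ y ∈ Ω, ∀ x ∈ P, u y x = dotp x (R y x) - φ y (R y x))
    (husm : ContDiffOn ℝ (⊤ : ℕ∞)
      (fun p : (Fin n → ℝ) × (Fin m → ℝ) => u p.1 p.2) (Ω ×ˢ P)) :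
    (∀ y ∈ Ω, ∀ ρ : Fin m → ℝ,
        lap (fun y' => φ y' ρ) y
          = ∑ a : Fin n,
              dotp
                ((hess (φ y) ρ)⁻¹.mulVec
                  (grad (fun ρ' => pd (fun y' => φ y' ρ') a y) ρ))
                (grad (fun ρ' => pd (fun y' => φ y' ρ') a y) ρ))
      ↔ (∀ x ∈ P, ∀ y ∈ Ω, lap (fun y' => u y' x) y = 0) := by
  have hφ' : ContDiffOn ℝ (⊤ : ℕ∞) (LegAux.unc φ)
      (Ω ×ˢ (Set.univ : Set (Fin m → ℝ))) := hφ
  have husm' : ContDiffOn ℝ (⊤ : ℕ∞) (LegAux.unc u) (Ω ×ˢ P) := husm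
  have hgrad : ∀ y' ∈ Ω, ∀ ρ' : Fin m → ℝ, grad (φ y') ρ' = LegAux.Gv φ (y', ρ') := by
    intro y' hy' ρ'
    funext i
    exact LegAux.grad_eq hΩ isOpen_univ hφ' hy' trivial i
  have hmemc : ∀ w ∈ Ω ×ˢ (Set.univ : Set (Fin m → ℝ)),
      LegAux.cmap φ w ∈ Ω ×ˢ P := by
    rintro ⟨y', ρ'⟩ hw
    refine ⟨hw.1, ?_⟩
    have := hmem y' hw.1 ρ'
    rwa [hgrad y' hw.1 ρ'] at this
  have hI : ∀ w ∈ Ω ×ˢ (Set.univ : Set (Fin m → ℝ)),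
      LegAux.unc φ w = dotp (LegAux.Gv φ w) w.2 - LegAux.unc u (LegAux.cmap φ w) := by
    rintro ⟨y', ρ'⟩ hw
    have hy' : y' ∈ Ω := hw.1
    have hgx : grad (φ y') ρ' = LegAux.Gv φ (y', ρ') := hgrad y' hy' ρ'
    have hx'P : LegAux.Gv φ (y', ρ') ∈ P := by rw [← hgx]; exact hmem y' hy' ρ'
    have hux := hu y' hy' _ hx'P
    have hRx : R y' (LegAux.Gv φ (y', ρ')) = ρ' := by
      rw [← hgx]
      exact hR₂ y' hy' ρ'
    rw [hRx] at hux
    show φ y' ρ' = dotp (LegAux.Gv φ (y', ρ')) ρ' - u y' (LegAux.Gv φ (y', ρ'))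
    rw [hux]
    ring
  constructor
  · intro hHM x hx y hy
    have hgx : LegAux.Gv φ (y, R y x) = x := by
      rw [← hgrad y hy (R y x)]
      exact hR₁ y hy x hx
    have hk := LegAux.key hΩ hP hφ' husm' hI hmemc hpos hy (R y x)
    rw [hgx] at hk
    have hh := hHM y hy (R y x)
    linarith
  · intro h0 y hy ρ
    have hxP : LegAux.Gv φ (y, ρ) ∈ P := by
      rw [← hgrad y hy ρ]
      exact hmem y hy ρ
    have hk := LegAux.key hΩ hP hφ' husm' hI hmemc hpos hy ρ
    have hu0 := h0 _ hxP y hy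
    linarith
end
end

section
/- The family φ evolves by the (torus-invariant, Euclidean-parameter) Eells–Sampson harmonic map flow, ∂_t φ(t,y,ρ) = Δ_y φ(t,y,ρ) − Σ_{a=1}^{n} ⟨(∇²_ρφ(t,y,ρ))⁻¹ ∇_ρ(∂_{y_a}φ)(t,y,ρ), ∇_ρ(∂_{y_a}φ)(t,y,ρ)⟩ for all (t,y,ρ) ∈ I × Ω × ℝᵐ, if and only if the family of Legendre transforms evolves by the linear heat flow, ∂_t u(t,y,x) = Δ_y u(t,y,x) for all (t,y,x) ∈ I × Ω × P. (Under the Legendre transform the Eells–Sampson flow on Kähler potentials is mapped to the heat flow on symplectic potentials.) -/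
open scoped BigOperators
open MeasureTheory Real

noncomputable section

section Aux

variable {m n : ℕ}

private lemma sliceT (F : ℝ × (Fin n → ℝ) × (Fin m → ℝ) → ℝ) {t : ℝ} {y : Fin n → ℝ}
    {ρ : Fin m → ℝ} (h : DifferentiableAt ℝ F (t, y, ρ)) :
    deriv (fun s => F (s, y, ρ)) t = fderiv ℝ F (t, y, ρ) (1, 0, 0) := by
  have hι : HasFDerivAt (fun s : ℝ => ((s, y, ρ) : ℝ × (Fin n → ℝ) × (Fin m → ℝ)))
      ((ContinuousLinearMap.id ℝ ℝ).prod 0) t :=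
    (hasFDerivAt_id t).prodMk (hasFDerivAt_const (y, ρ) t)
  have h2 : HasFDerivAt (fun s => F (s, y, ρ))
      ((fderiv ℝ F (t, y, ρ)).comp ((ContinuousLinearMap.id ℝ ℝ).prod 0)) t :=
    h.hasFDerivAt.comp t hι
  rw [← fderiv_apply_one_eq_deriv, h2.fderiv]
  simp
  rfl

private lemma sliceY (F : ℝ × (Fin n → ℝ) × (Fin m → ℝ) → ℝ) {t : ℝ} {y : Fin n → ℝ}
    {ρ : Fin m → ℝ} (h : DifferentiableAt ℝ F (t, y, ρ)) (v : Fin n → ℝ) :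
    fderiv ℝ (fun y' => F (t, y', ρ)) y v = fderiv ℝ F (t, y, ρ) (0, v, 0) := by
  have hι : HasFDerivAt (fun y' : Fin n → ℝ => ((t, y', ρ) : ℝ × (Fin n → ℝ) × (Fin m → ℝ)))
      ((0 : (Fin n → ℝ) →L[ℝ] ℝ).prod ((ContinuousLinearMap.id ℝ (Fin n → ℝ)).prod 0)) y :=
    (hasFDerivAt_const t y).prodMk ((hasFDerivAt_id y).prodMk (hasFDerivAt_const ρ y))
  have h2 : HasFDerivAt (fun y' => F (t, y', ρ)) ((fderiv ℝ F (t, y, ρ)).comp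
      ((0 : (Fin n → ℝ) →L[ℝ] ℝ).prod ((ContinuousLinearMap.id ℝ (Fin n → ℝ)).prod 0))) y :=
    h.hasFDerivAt.comp y hι
  rw [h2.fderiv]
  simp

private lemma sliceX (F : ℝ × (Fin n → ℝ) × (Fin m → ℝ) → ℝ) {t : ℝ} {y : Fin n → ℝ}
    {ρ : Fin m → ℝ} (h : DifferentiableAt ℝ F (t, y, ρ)) (v : Fin m → ℝ) :
    fderiv ℝ (fun ρ' => F (t, y, ρ')) ρ v = fderiv ℝ F (t, y, ρ) (0, 0, v) := by
  have hι : HasFDerivAt (fun ρ' : Fin m → ℝ => ((t, y, ρ') : ℝ × (Fin n → ℝ) × (Fin m → ℝ)))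
      ((0 : (Fin m → ℝ) →L[ℝ] ℝ).prod ((0 : (Fin m → ℝ) →L[ℝ] (Fin n → ℝ)).prod
        (ContinuousLinearMap.id ℝ (Fin m → ℝ)))) ρ :=
    (hasFDerivAt_const t ρ).prodMk ((hasFDerivAt_const y ρ).prodMk (hasFDerivAt_id ρ))
  have h2 : HasFDerivAt (fun ρ' => F (t, y, ρ')) ((fderiv ℝ F (t, y, ρ)).comp
      ((0 : (Fin m → ℝ) →L[ℝ] ℝ).prod ((0 : (Fin m → ℝ) →L[ℝ] (Fin n → ℝ)).prod
        (ContinuousLinearMap.id ℝ (Fin m → ℝ))))) ρ :=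
    h.hasFDerivAt.comp ρ hι
  rw [h2.fderiv]
  simp

private lemma clm_decomp (L : (ℝ × (Fin n → ℝ) × (Fin m → ℝ)) →L[ℝ] ℝ)
    (w : ℝ × (Fin n → ℝ) × (Fin m → ℝ)) :
    L w = w.1 * L (1, 0, 0) + (∑ a, w.2.1 a * L (0, Pi.single a 1, 0))
      + ∑ i, w.2.2 i * L (0, 0, Pi.single i 1) := by
  have hw : w = w.1 • ((1:ℝ), (0 : Fin n → ℝ), (0 : Fin m → ℝ))
      + (∑ a, w.2.1 a • ((0:ℝ), (Pi.single a 1 : Fin n → ℝ), (0 : Fin m → ℝ)))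
      + ∑ i, w.2.2 i • ((0:ℝ), (0 : Fin n → ℝ), (Pi.single i 1 : Fin m → ℝ)) := by
    refine Prod.ext ?_ (Prod.ext ?_ ?_)
    · simp [Prod.fst_sum]
    · simp [Prod.fst_sum, Prod.snd_sum]
      funext j
      simp [Finset.sum_apply, Pi.single_apply]
    · simp [Prod.fst_sum, Prod.snd_sum]
      funext j
      simp [Finset.sum_apply, Pi.single_apply]
  conv_lhs => rw [hw]
  simp only [map_add, map_sum, _root_.map_smul, smul_eq_mul]

private lemma two_le_top : (2 : WithTop ℕ∞) ≤ ((⊤:ℕ∞) : WithTop ℕ∞) := by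
  rw [show ((2 : WithTop ℕ∞)) = (((2:ℕ∞)) : WithTop ℕ∞) by rfl]
  exact WithTop.coe_le_coe.mpr le_top

private lemma one_le_top' : ((⊤:ℕ∞) : WithTop ℕ∞) ≠ 0 := by
  simp

private lemma top_add_one_le : ((⊤:ℕ∞) : WithTop ℕ∞) + 1 ≤ ((⊤:ℕ∞) : WithTop ℕ∞) := by norm_cast

private lemma contDiffOn_fderiv_dir {E : Type*} [NormedAddCommGroup E] [NormedSpace ℝ E]
    {S : Set E} (hS : IsOpen S) {F : E → ℝ} (hF : ContDiffOn ℝ (⊤:ℕ∞) F S) (w : E) :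
    ContDiffOn ℝ (⊤:ℕ∞) (fun p => fderiv ℝ F p w) S := by
  have h1 : ContDiffOn ℝ (⊤:ℕ∞) (fderiv ℝ F) S := hF.fderiv_of_isOpen hS top_add_one_le
  exact (ContinuousLinearMap.apply ℝ ℝ w).contDiff.comp_contDiffOn h1

private lemma fderiv_dir_apply {E : Type*} [NormedAddCommGroup E] [NormedSpace ℝ E]
    {F : E → ℝ} {p : E} (hd : DifferentiableAt ℝ (fderiv ℝ F) p) (v w : E) :
    fderiv ℝ (fun q => fderiv ℝ F q w) p v = fderiv ℝ (fderiv ℝ F) p v w := by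
  have h2 : HasFDerivAt (fun q => fderiv ℝ F q w)
      ((ContinuousLinearMap.apply ℝ ℝ w).comp (fderiv ℝ (fderiv ℝ F) p)) p :=
    (ContinuousLinearMap.apply ℝ ℝ w).hasFDerivAt.comp p hd.hasFDerivAt
  rw [h2.fderiv]
  rfl

private lemma symm_second {E : Type*} [NormedAddCommGroup E] [NormedSpace ℝ E]
    {S : Set E} (hS : IsOpen S) {F : E → ℝ} (hF : ContDiffOn ℝ (⊤:ℕ∞) F S) {p : E}
    (hp : p ∈ S) (v w : E) :
    fderiv ℝ (fun q => fderiv ℝ F q w) p v = fderiv ℝ (fun q => fderiv ℝ F q v) p w := by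
  have hFat : ContDiffAt ℝ (⊤:ℕ∞) F p := hF.contDiffAt (hS.mem_nhds hp)
  have hsymm := hFat.isSymmSndFDerivAt (by simpa using two_le_top)
  have hd : DifferentiableAt ℝ (fderiv ℝ F) p :=
    ((hF.fderiv_of_isOpen hS top_add_one_le).contDiffAt (hS.mem_nhds hp)).differentiableAt one_le_top'
  rw [fderiv_dir_apply hd, fderiv_dir_apply hd, hsymm v w]

private lemma posdef_inv_mulVec {k : ℕ} {H : Matrix (Fin k) (Fin k) ℝ} (hH : H.PosDef)
    (v : Fin k → ℝ) : H⁻¹.mulVec (H.mulVec v) = v := by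
  rw [Matrix.mulVec_mulVec, Matrix.nonsing_inv_mul _ (isUnit_iff_ne_zero.mpr hH.det_pos.ne'),
    Matrix.one_mulVec]

private lemma posdef_mulVec_eq_zero {k : ℕ} {H : Matrix (Fin k) (Fin k) ℝ} (hH : H.PosDef)
    {v : Fin k → ℝ} (h : H.mulVec v = 0) : v = 0 := by
  have := posdef_inv_mulVec hH v
  rw [h, Matrix.mulVec_zero] at this
  exact this.symm

private lemma dotp_single (v : Fin m → ℝ) (i : Fin m) : dotp v (Pi.single i 1) = v i := by
  simp [dotp, Pi.single_apply]

private lemma dotp_zero_right (v : Fin m → ℝ) : dotp v (0 : Fin m → ℝ) = 0 := by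
  simp [dotp]

private lemma dotp_comm (v w : Fin m → ℝ) : dotp v w = dotp w v := by
  simp [dotp, mul_comm]

private lemma clm_split (L : (ℝ × (Fin n → ℝ) × (Fin m → ℝ)) →L[ℝ] ℝ) (s : ℝ)
    (v : Fin n → ℝ) (c : Fin m → ℝ) :
    L (s, v, c) = L (s, v, 0) + ∑ j, c j * L (0, 0, Pi.single j 1) := by
  have h0 : ((s, v, (0 : Fin m → ℝ)) : ℝ × (Fin n → ℝ) × (Fin m → ℝ)) + (0, 0, c) = (s, v, c) := by
    simp
  rw [← h0, map_add]
  congr 1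
  have hc : ((0, 0, c) : ℝ × (Fin n → ℝ) × (Fin m → ℝ))
      = ∑ j, c j • ((0:ℝ), (0 : Fin n → ℝ), (Pi.single j 1 : Fin m → ℝ)) := by
    refine Prod.ext ?_ (Prod.ext ?_ ?_)
    · simp [Prod.fst_sum]
    · simp [Prod.fst_sum, Prod.snd_sum]
    · simp [Prod.fst_sum, Prod.snd_sum]
      funext k
      simp [Finset.sum_apply, Pi.single_apply]
  rw [hc, map_sum]
  simp only [_root_.map_smul, smul_eq_mul]

private lemma clm_zero (L : (ℝ × (Fin n → ℝ) × (Fin m → ℝ)) →L[ℝ] ℝ) :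
    L ((0:ℝ), (0 : Fin n → ℝ), (0 : Fin m → ℝ)) = 0 := by
  rw [show ((0:ℝ), (0 : Fin n → ℝ), (0 : Fin m → ℝ))
      = (0 : ℝ × (Fin n → ℝ) × (Fin m → ℝ)) from rfl, map_zero]

private lemma dotp_neg_neg (v w : Fin m → ℝ) : dotp (-v) (-w) = dotp v w := by
  simp [dotp]

private lemma mulVec_apply {k : ℕ} (M : Matrix (Fin k) (Fin k) ℝ) (v : Fin k → ℝ)
    (i : Fin k) : M.mulVec v i = ∑ j, M i j * v j := rfl

end Aux

section Key

variable {m n : ℕ}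

private lemma key
    {I : Set ℝ} (hIo : IsOpen I)
    {Ω : Set (Fin n → ℝ)} (hΩ : IsOpen Ω)
    {P : Set (Fin m → ℝ)} (hP : IsOpen P)
    {φ u : ℝ → (Fin n → ℝ) → (Fin m → ℝ) → ℝ}
    (hφ : ContDiffOn ℝ (⊤ : ℕ∞)
      (fun p : ℝ × (Fin n → ℝ) × (Fin m → ℝ) => φ p.1 p.2.1 p.2.2) (I ×ˢ Ω ×ˢ Set.univ))
    (hpos : ∀ t ∈ I, ∀ y ∈ Ω, ∀ ρ : Fin m → ℝ, (hess (φ t y) ρ).PosDef)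
    (hmem : ∀ t ∈ I, ∀ y ∈ Ω, ∀ ρ : Fin m → ℝ, grad (φ t y) ρ ∈ P)
    (husm : ContDiffOn ℝ (⊤ : ℕ∞)
      (fun p : ℝ × (Fin n → ℝ) × (Fin m → ℝ) => u p.1 p.2.1 p.2.2) (I ×ˢ Ω ×ˢ P))
    (hmaster : ∀ t ∈ I, ∀ y ∈ Ω, ∀ ρ : Fin m → ℝ,
      φ t y ρ = dotp (grad (φ t y) ρ) ρ - u t y (grad (φ t y) ρ))
    {t : ℝ} (ht : t ∈ I) {y : Fin n → ℝ} (hy : y ∈ Ω) (ρ : Fin m → ℝ) :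
    deriv (fun t' => φ t' y ρ) t - lap (fun y' => φ t y' ρ) y
      + ∑ c : Fin n, dotp ((hess (φ t y) ρ)⁻¹.mulVec
          (grad (fun ρ' => pd (fun y' => φ t y' ρ') c y) ρ))
          (grad (fun ρ' => pd (fun y' => φ t y' ρ') c y) ρ)
      = -(deriv (fun t' => u t' y (grad (φ t y) ρ)) t
          - lap (fun y' => u t y' (grad (φ t y) ρ)) y) := by
  classical
  set S : Set (ℝ × (Fin n → ℝ) × (Fin m → ℝ)) := I ×ˢ Ω ×ˢ Set.univ with hSdef
  set SP : Set (ℝ × (Fin n → ℝ) × (Fin m → ℝ)) := I ×ˢ Ω ×ˢ P with hSPdef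
  have hS : IsOpen S := hIo.prod (hΩ.prod isOpen_univ)
  have hSP : IsOpen SP := hIo.prod (hΩ.prod hP)
  set Φ : ℝ × (Fin n → ℝ) × (Fin m → ℝ) → ℝ := fun p => φ p.1 p.2.1 p.2.2 with hΦdef
  set U : ℝ × (Fin n → ℝ) × (Fin m → ℝ) → ℝ := fun p => u p.1 p.2.1 p.2.2 with hUdef
  have hφ' : ContDiffOn ℝ (⊤ : ℕ∞) Φ S := hφ
  have husm' : ContDiffOn ℝ (⊤ : ℕ∞) U SP := husm
  set g : (ℝ × (Fin n → ℝ) × (Fin m → ℝ)) → (Fin m → ℝ) :=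
    fun p i => fderiv ℝ Φ p (0, 0, Pi.single i 1) with hgdef
  have hΦdiff : ∀ {p}, p ∈ S → DifferentiableAt ℝ Φ p := fun {p} hp =>
    (hφ'.contDiffAt (hS.mem_nhds hp)).differentiableAt one_le_top'
  have hUdiff : ∀ {p}, p ∈ SP → DifferentiableAt ℝ U p := fun {p} hp =>
    (husm'.contDiffAt (hSP.mem_nhds hp)).differentiableAt one_le_top'
  have hgd : ∀ {p}, p ∈ S → ∀ i, DifferentiableAt ℝ (fun q => g q i) p := fun {p} hp i =>
    ((contDiffOn_fderiv_dir hS hφ' _).contDiffAt (hS.mem_nhds hp)).differentiableAt one_le_top'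
  have hgeq : ∀ p ∈ S, g p = grad (φ p.1 p.2.1) p.2.2 := by
    intro p hp
    funext i
    exact (sliceX Φ (hΦdiff hp) (Pi.single i 1)).symm
  have hGmem : ∀ p ∈ S, ((p.1, p.2.1, g p) : ℝ × (Fin n → ℝ) × (Fin m → ℝ)) ∈ SP := by
    intro p hp
    refine ⟨hp.1, hp.2.1, ?_⟩
    rw [hgeq p hp]
    exact hmem p.1 hp.1 p.2.1 hp.2.1 p.2.2
  have hG2 : ∀ p ∈ S, HasFDerivAt
      (fun q : ℝ × (Fin n → ℝ) × (Fin m → ℝ) =>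
        ((q.1, q.2.1, g q) : ℝ × (Fin n → ℝ) × (Fin m → ℝ)))
      ((ContinuousLinearMap.fst ℝ ℝ ((Fin n → ℝ) × (Fin m → ℝ))).prod
        (((ContinuousLinearMap.fst ℝ (Fin n → ℝ) (Fin m → ℝ)).comp
            (ContinuousLinearMap.snd ℝ ℝ ((Fin n → ℝ) × (Fin m → ℝ)))).prod
          (ContinuousLinearMap.pi fun i => fderiv ℝ (fun q => g q i) p))) p := by
    intro p hp
    exact ((ContinuousLinearMap.fst ℝ ℝ _).hasFDerivAt).prodMk
      ((((ContinuousLinearMap.fst ℝ (Fin n → ℝ) (Fin m → ℝ)).comp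
          (ContinuousLinearMap.snd ℝ ℝ _)).hasFDerivAt).prodMk
        (hasFDerivAt_pi.mpr fun i => (hgd hp i).hasFDerivAt))
  -- the fundamental first variation formula
  have hDΦ : ∀ p ∈ S, ∀ (w1 : ℝ) (w2 : Fin n → ℝ) (w3 : Fin m → ℝ),
      fderiv ℝ Φ p (w1, w2, w3)
        = dotp (fun i => fderiv ℝ (fun q => g q i) p (w1, w2, w3)) p.2.2 + dotp (g p) w3
          - fderiv ℝ U (p.1, p.2.1, g p)
              (w1, w2, fun i => fderiv ℝ (fun q => g q i) p (w1, w2, w3)) := by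
    intro p hp w1 w2 w3
    have hgp := hgd hp
    set Ci : Fin m → (ℝ × (Fin n → ℝ) × (Fin m → ℝ)) →L[ℝ] ℝ := fun i =>
      (ContinuousLinearMap.proj i).comp
        ((ContinuousLinearMap.snd ℝ (Fin n → ℝ) (Fin m → ℝ)).comp
          (ContinuousLinearMap.snd ℝ ℝ ((Fin n → ℝ) × (Fin m → ℝ)))) with hCidef
    have hCi : ∀ i, HasFDerivAt (fun q : ℝ × (Fin n → ℝ) × (Fin m → ℝ) => q.2.2 i) (Ci i) p :=
      fun i => (Ci i).hasFDerivAt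
    have h1 : HasFDerivAt (fun q : ℝ × (Fin n → ℝ) × (Fin m → ℝ) => ∑ i, g q i * q.2.2 i)
        (∑ i, (g p i • Ci i + p.2.2 i • fderiv ℝ (fun q => g q i) p)) p := by
      refine HasFDerivAt.fun_sum fun i _ => ?_
      exact (hgp i).hasFDerivAt.mul (hCi i)
    have h3 : HasFDerivAt U (fderiv ℝ U (p.1, p.2.1, g p)) (p.1, p.2.1, g p) :=
      (hUdiff (hGmem p hp)).hasFDerivAt
    have h4 := h3.comp p (hG2 p hp)
    have h5 := h1.sub h4
    have heq : (fun q : ℝ × (Fin n → ℝ) × (Fin m → ℝ) =>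
        (∑ i, g q i * q.2.2 i) - U (q.1, q.2.1, g q)) =ᶠ[nhds p] Φ := by
      filter_upwards [hS.mem_nhds hp] with q hq
      obtain ⟨hq1, hq2, -⟩ := hq
      have hgq := hgeq q ⟨hq1, hq2, trivial⟩
      calc (∑ i, g q i * q.2.2 i) - U (q.1, q.2.1, g q)
          = dotp (g q) q.2.2 - u q.1 q.2.1 (g q) := rfl
        _ = dotp (grad (φ q.1 q.2.1) q.2.2) q.2.2
              - u q.1 q.2.1 (grad (φ q.1 q.2.1) q.2.2) := by rw [hgq]
        _ = φ q.1 q.2.1 q.2.2 := (hmaster q.1 hq1 q.2.1 hq2 q.2.2).symm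
        _ = Φ q := rfl
    have h6 := h5.congr_of_eventuallyEq heq.symm
    rw [h6.fderiv]
    simp only [ContinuousLinearMap.coe_sub', Pi.sub_apply, ContinuousLinearMap.coe_comp',
      Function.comp_apply, ContinuousLinearMap.sum_apply, ContinuousLinearMap.add_apply,
      ContinuousLinearMap.smul_apply, smul_eq_mul, ContinuousLinearMap.prod_apply,
      ContinuousLinearMap.coe_fst', ContinuousLinearMap.coe_snd', ContinuousLinearMap.pi_apply,
      ContinuousLinearMap.proj_apply, hCidef]
    simp [dotp, Finset.sum_add_distrib, mul_comm]
    ring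
  -- identification of the Hessian
  have hHg : ∀ p ∈ S, ∀ i j, hess (φ p.1 p.2.1) p.2.2 i j
      = fderiv ℝ (fun q => g q j) p (0, 0, Pi.single i 1) := by
    intro p hp i j
    have hfun : (fun ρ' => pd (φ p.1 p.2.1) j ρ') = (fun ρ' => g (p.1, p.2.1, ρ') j) := by
      funext ρ'
      exact (congrFun (hgeq (p.1, p.2.1, ρ') ⟨hp.1, hp.2.1, trivial⟩) j).symm
    show pd (fun q => pd (φ p.1 p.2.1) j q) i p.2.2 = _
    rw [show (fun q => pd (φ p.1 p.2.1) j q) = (fun ρ' => g (p.1, p.2.1, ρ') j) from hfun]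
    exact sliceX (fun q => g q j) (hgd hp j) (Pi.single i 1)
  -- the gradient of u is the inverse Legendre map
  have hdual : ∀ p ∈ S, ∀ j,
      fderiv ℝ U (p.1, p.2.1, g p) (0, 0, Pi.single j 1) = p.2.2 j := by
    intro p hp
    have hHmul : (hess (φ p.1 p.2.1) p.2.2).mulVec
        (p.2.2 - fun j => fderiv ℝ U (p.1, p.2.1, g p) (0, 0, Pi.single j 1)) = 0 := by
      funext i
      have hform := hDΦ p hp 0 0 (Pi.single i 1)
      rw [show fderiv ℝ Φ p (0, 0, Pi.single i 1) = g p i from rfl, dotp_single] at hform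
      rw [clm_split (fderiv ℝ U (p.1, p.2.1, g p)) 0 0
        (fun j => fderiv ℝ (fun q => g q j) p (0, 0, Pi.single i 1)), clm_zero, zero_add] at hform
      simp only [dotp] at hform
      show ∑ j, hess (φ p.1 p.2.1) p.2.2 i j
          * (p.2.2 j - fderiv ℝ U (p.1, p.2.1, g p) (0, 0, Pi.single j 1)) = 0
      calc ∑ j, hess (φ p.1 p.2.1) p.2.2 i j
            * (p.2.2 j - fderiv ℝ U (p.1, p.2.1, g p) (0, 0, Pi.single j 1))
          = ∑ j, (fderiv ℝ (fun q => g q j) p (0, 0, Pi.single i 1) * p.2.2 j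
              - fderiv ℝ (fun q => g q j) p (0, 0, Pi.single i 1)
                * fderiv ℝ U (p.1, p.2.1, g p) (0, 0, Pi.single j 1)) := by
            refine Finset.sum_congr rfl fun j _ => ?_
            rw [hHg p hp i j, mul_sub]
        _ = (∑ j, fderiv ℝ (fun q => g q j) p (0, 0, Pi.single i 1) * p.2.2 j)
              - ∑ j, fderiv ℝ (fun q => g q j) p (0, 0, Pi.single i 1)
                * fderiv ℝ U (p.1, p.2.1, g p) (0, 0, Pi.single j 1) := by
            rw [Finset.sum_sub_distrib]
        _ = 0 := by linarith
    have hz := posdef_mulVec_eq_zero (hpos p.1 hp.1 p.2.1 hp.2.1 p.2.2) hHmul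
    intro j
    have hzj := congrFun hz j
    simp only [Pi.sub_apply, Pi.zero_apply] at hzj
    linarith
  -- the time and space first derivatives transform with a sign
  have hDt : ∀ p ∈ S, fderiv ℝ Φ p (1, 0, 0)
      = -fderiv ℝ U (p.1, p.2.1, g p) (1, 0, 0) := by
    intro p hp
    have hform := hDΦ p hp 1 0 0
    rw [dotp_zero_right, clm_split (fderiv ℝ U (p.1, p.2.1, g p)) 1 0
      (fun i => fderiv ℝ (fun q => g q i) p (1, 0, 0))] at hform
    simp only [hdual p hp] at hform
    simp only [dotp] at hform
    linarith
  have hDy : ∀ (a : Fin n), ∀ p ∈ S, fderiv ℝ Φ p (0, Pi.single a 1, 0)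
      = -fderiv ℝ U (p.1, p.2.1, g p) (0, Pi.single a 1, 0) := by
    intro a p hp
    have hform := hDΦ p hp 0 (Pi.single a 1) 0
    rw [dotp_zero_right, clm_split (fderiv ℝ U (p.1, p.2.1, g p)) 0 (Pi.single a 1)
      (fun i => fderiv ℝ (fun q => g q i) p (0, Pi.single a 1, 0))] at hform
    simp only [hdual p hp] at hform
    simp only [dotp] at hform
    linarith
  -- localization at the base point
  have hp₀ : ((t, y, ρ) : ℝ × (Fin n → ℝ) × (Fin m → ℝ)) ∈ S := ⟨ht, hy, trivial⟩
  have hgp₀ : g (t, y, ρ) = grad (φ t y) ρ := hgeq (t, y, ρ) hp₀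
  have hxP : grad (φ t y) ρ ∈ P := hmem t ht y hy ρ
  have hq₀ : ((t, y, grad (φ t y) ρ) : ℝ × (Fin n → ℝ) × (Fin m → ℝ)) ∈ SP := ⟨ht, hy, hxP⟩
  have hΦadiff : ∀ w, DifferentiableAt ℝ (fun p' => fderiv ℝ Φ p' w) (t, y, ρ) := fun w =>
    ((contDiffOn_fderiv_dir hS hφ' w).contDiffAt (hS.mem_nhds hp₀)).differentiableAt one_le_top'
  have hUadiff : ∀ w, DifferentiableAt ℝ (fun q => fderiv ℝ U q w)
      (t, y, grad (φ t y) ρ) := fun w =>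
    ((contDiffOn_fderiv_dir hSP husm' w).contDiffAt (hSP.mem_nhds hq₀)).differentiableAt
      one_le_top'
  have hHg₀ : ∀ i j, hess (φ t y) ρ i j
      = fderiv ℝ (fun q => g q j) (t, y, ρ) (0, 0, Pi.single i 1) := hHg (t, y, ρ) hp₀
  -- chain rule for second derivatives
  have hchain : ∀ (a : Fin n) (w1 : ℝ) (w2 : Fin n → ℝ) (w3 : Fin m → ℝ),
      fderiv ℝ (fun p' => fderiv ℝ Φ p' (0, Pi.single a 1, 0)) (t, y, ρ) (w1, w2, w3)
        = -(fderiv ℝ (fun q => fderiv ℝ U q (0, Pi.single a 1, 0)) (t, y, grad (φ t y) ρ)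
            (w1, w2, fun i => fderiv ℝ (fun q => g q i) (t, y, ρ) (w1, w2, w3))) := by
    intro a w1 w2 w3
    have h3 : HasFDerivAt (fun q => fderiv ℝ U q (0, Pi.single a 1, 0))
        (fderiv ℝ (fun q => fderiv ℝ U q (0, Pi.single a 1, 0)) (t, y, grad (φ t y) ρ))
        (t, y, g (t, y, ρ)) := by
      rw [hgp₀]
      exact (hUadiff (0, Pi.single a 1, 0)).hasFDerivAt
    have hcomp := h3.comp ((t, y, ρ) : ℝ × (Fin n → ℝ) × (Fin m → ℝ)) (hG2 (t, y, ρ) hp₀)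
    have hev : (fun p' => -fderiv ℝ U (p'.1, p'.2.1, g p') (0, Pi.single a 1, 0))
        =ᶠ[nhds ((t, y, ρ) : ℝ × (Fin n → ℝ) × (Fin m → ℝ))]
          (fun p' => fderiv ℝ Φ p' (0, Pi.single a 1, 0)) := by
      filter_upwards [hS.mem_nhds hp₀] with q hq
      exact (hDy a q hq).symm
    have h7 := (hcomp.neg).congr_of_eventuallyEq hev.symm
    rw [h7.fderiv]
    simp only [ContinuousLinearMap.neg_apply, ContinuousLinearMap.coe_comp',
      Function.comp_apply, ContinuousLinearMap.prod_apply, ContinuousLinearMap.coe_fst',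
      ContinuousLinearMap.coe_snd', ContinuousLinearMap.pi_apply]
    rfl
  -- the ES gradient vector as a second derivative of Φ
  have hGaj : ∀ (a : Fin n) (j : Fin m),
      grad (fun ρ' => pd (fun y' => φ t y' ρ') a y) ρ j
        = fderiv ℝ (fun p' => fderiv ℝ Φ p' (0, Pi.single a 1, 0)) (t, y, ρ)
            (0, 0, Pi.single j 1) := by
    intro a j
    have hfun : (fun ρ' => pd (fun y' => φ t y' ρ') a y)
        = (fun ρ' => fderiv ℝ Φ (t, y, ρ') (0, Pi.single a 1, 0)) := by
      funext ρ'
      exact sliceY Φ (t := t) (y := y) (ρ := ρ')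
        (hΦdiff (show ((t, y, ρ') : ℝ × (Fin n → ℝ) × (Fin m → ℝ)) ∈ S from ⟨ht, hy, trivial⟩))
        (Pi.single a 1)
    show pd (fun ρ' => pd (fun y' => φ t y' ρ') a y) j ρ = _
    rw [hfun]
    exact sliceX (fun p' => fderiv ℝ Φ p' (0, Pi.single a 1, 0)) (hΦadiff _) (Pi.single j 1)
  -- symmetry of second derivatives
  have hsym : ∀ (a : Fin n) (j : Fin m),
      fderiv ℝ (fun q => g q j) (t, y, ρ) (0, Pi.single a 1, 0)
        = fderiv ℝ (fun p' => fderiv ℝ Φ p' (0, Pi.single a 1, 0)) (t, y, ρ)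
            (0, 0, Pi.single j 1) :=
    fun a j => symm_second hS hφ' hp₀ (0, Pi.single a 1, 0) (0, 0, Pi.single j 1)
  -- the ES gradient equals -H·vₐ
  have hGa_eq : ∀ a : Fin n,
      grad (fun ρ' => pd (fun y' => φ t y' ρ') a y) ρ
        = -((hess (φ t y) ρ).mulVec (fun j =>
            fderiv ℝ (fun q => fderiv ℝ U q (0, Pi.single a 1, 0)) (t, y, grad (φ t y) ρ)
              (0, 0, Pi.single j 1))) := by
    intro a
    funext j
    simp only [Pi.neg_apply]
    rw [hGaj a j, hchain a 0 0 (Pi.single j 1)]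
    rw [clm_split (fderiv ℝ (fun q => fderiv ℝ U q (0, Pi.single a 1, 0))
      (t, y, grad (φ t y) ρ)) 0 0 _, clm_zero, zero_add]
    congr 1
    rw [mulVec_apply]
    refine Finset.sum_congr rfl fun k _ => ?_
    show fderiv ℝ (fun q => g q k) (t, y, ρ) (0, 0, Pi.single j 1)
        * fderiv ℝ (fun q => fderiv ℝ U q (0, Pi.single a 1, 0)) (t, y, grad (φ t y) ρ)
          (0, 0, Pi.single k 1) = _
    rw [hHg₀ j k]
  -- Laplacian identifications
  have hlapφ : lap (fun y' => φ t y' ρ) y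
      = ∑ a : Fin n, fderiv ℝ (fun p' => fderiv ℝ Φ p' (0, Pi.single a 1, 0)) (t, y, ρ)
          (0, Pi.single a 1, 0) := by
    refine Finset.sum_congr rfl fun a _ => ?_
    have hev : (fun y'' => pd (fun y' => φ t y' ρ) a y'')
        =ᶠ[nhds y] (fun y'' => fderiv ℝ Φ (t, y'', ρ) (0, Pi.single a 1, 0)) := by
      filter_upwards [hΩ.mem_nhds hy] with y'' hy''
      exact sliceY Φ (hΦdiff (show ((t, y'', ρ) : ℝ × (Fin n → ℝ) × (Fin m → ℝ)) ∈ S from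
        ⟨ht, hy'', trivial⟩)) (Pi.single a 1)
    show fderiv ℝ (fun y'' => pd (fun y' => φ t y' ρ) a y'') y (Pi.single a 1) = _
    rw [hev.fderiv_eq]
    exact sliceY (fun p' => fderiv ℝ Φ p' (0, Pi.single a 1, 0)) (hΦadiff _) (Pi.single a 1)
  have hlapu : lap (fun y' => u t y' (grad (φ t y) ρ)) y
      = ∑ a : Fin n, fderiv ℝ (fun q => fderiv ℝ U q (0, Pi.single a 1, 0))
          (t, y, grad (φ t y) ρ) (0, Pi.single a 1, 0) := by
    refine Finset.sum_congr rfl fun a _ => ?_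
    have hev : (fun y'' => pd (fun y' => u t y' (grad (φ t y) ρ)) a y'')
        =ᶠ[nhds y] (fun y'' => fderiv ℝ U (t, y'', grad (φ t y) ρ) (0, Pi.single a 1, 0)) := by
      filter_upwards [hΩ.mem_nhds hy] with y'' hy''
      exact sliceY U (hUdiff (show ((t, y'', grad (φ t y) ρ) : ℝ × (Fin n → ℝ) × (Fin m → ℝ))
        ∈ SP from ⟨ht, hy'', hxP⟩)) (Pi.single a 1)
    show fderiv ℝ (fun y'' => pd (fun y' => u t y' (grad (φ t y) ρ)) a y'') y (Pi.single a 1) = _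
    rw [hev.fderiv_eq]
    exact sliceY (fun q => fderiv ℝ U q (0, Pi.single a 1, 0)) (hUadiff _) (Pi.single a 1)
  -- time derivatives
  have hdtφ : deriv (fun t' => φ t' y ρ) t = fderiv ℝ Φ (t, y, ρ) (1, 0, 0) :=
    sliceT Φ (hΦdiff hp₀)
  have hdtu : deriv (fun t' => u t' y (grad (φ t y) ρ)) t
      = fderiv ℝ U (t, y, grad (φ t y) ρ) (1, 0, 0) :=
    sliceT U (hUdiff hq₀)
  have hDt₀ : fderiv ℝ Φ (t, y, ρ) (1, 0, 0)
      = -fderiv ℝ U (t, y, grad (φ t y) ρ) (1, 0, 0) := by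
    have h := hDt (t, y, ρ) hp₀
    rwa [hgp₀] at h
  -- the second derivative formula
  have hsecond : ∀ a : Fin n,
      fderiv ℝ (fun p' => fderiv ℝ Φ p' (0, Pi.single a 1, 0)) (t, y, ρ) (0, Pi.single a 1, 0)
        = -(fderiv ℝ (fun q => fderiv ℝ U q (0, Pi.single a 1, 0)) (t, y, grad (φ t y) ρ)
              (0, Pi.single a 1, 0)
            + ∑ j, grad (fun ρ' => pd (fun y' => φ t y' ρ') a y) ρ j
              * fderiv ℝ (fun q => fderiv ℝ U q (0, Pi.single a 1, 0)) (t, y, grad (φ t y) ρ)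
                (0, 0, Pi.single j 1)) := by
    intro a
    rw [hchain a 0 (Pi.single a 1) 0]
    rw [clm_split (fderiv ℝ (fun q => fderiv ℝ U q (0, Pi.single a 1, 0))
      (t, y, grad (φ t y) ρ)) 0 (Pi.single a 1) _]
    congr 2
    refine Finset.sum_congr rfl fun j _ => ?_
    congr 1
    show fderiv ℝ (fun q => g q j) (t, y, ρ) (0, Pi.single a 1, 0) = _
    rw [hsym a j, ← hGaj a j]
  -- algebraic identities for the ES term
  have hGa2 : ∀ a : Fin n,
      ∑ j, grad (fun ρ' => pd (fun y' => φ t y' ρ') a y) ρ j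
          * fderiv ℝ (fun q => fderiv ℝ U q (0, Pi.single a 1, 0)) (t, y, grad (φ t y) ρ)
            (0, 0, Pi.single j 1)
        = -(dotp (fun j => fderiv ℝ (fun q => fderiv ℝ U q (0, Pi.single a 1, 0))
              (t, y, grad (φ t y) ρ) (0, 0, Pi.single j 1))
            ((hess (φ t y) ρ).mulVec (fun j =>
              fderiv ℝ (fun q => fderiv ℝ U q (0, Pi.single a 1, 0)) (t, y, grad (φ t y) ρ)
                (0, 0, Pi.single j 1)))) := by
    intro a
    rw [hGa_eq a]
    simp only [Pi.neg_apply, neg_mul]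
    rw [Finset.sum_neg_distrib]
    congr 1
    rw [show (∑ j, (hess (φ t y) ρ).mulVec (fun k =>
        fderiv ℝ (fun q => fderiv ℝ U q (0, Pi.single a 1, 0)) (t, y, grad (φ t y) ρ)
          (0, 0, Pi.single k 1)) j
        * fderiv ℝ (fun q => fderiv ℝ U q (0, Pi.single a 1, 0)) (t, y, grad (φ t y) ρ)
          (0, 0, Pi.single j 1))
      = dotp ((hess (φ t y) ρ).mulVec (fun k =>
          fderiv ℝ (fun q => fderiv ℝ U q (0, Pi.single a 1, 0)) (t, y, grad (φ t y) ρ)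
            (0, 0, Pi.single k 1)))
        (fun j => fderiv ℝ (fun q => fderiv ℝ U q (0, Pi.single a 1, 0))
          (t, y, grad (φ t y) ρ) (0, 0, Pi.single j 1)) from rfl]
    rw [dotp_comm]
  have hsum3 : ∀ a : Fin n,
      dotp ((hess (φ t y) ρ)⁻¹.mulVec (grad (fun ρ' => pd (fun y' => φ t y' ρ') a y) ρ))
        (grad (fun ρ' => pd (fun y' => φ t y' ρ') a y) ρ)
      = dotp (fun j => fderiv ℝ (fun q => fderiv ℝ U q (0, Pi.single a 1, 0))
            (t, y, grad (φ t y) ρ) (0, 0, Pi.single j 1))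
          ((hess (φ t y) ρ).mulVec (fun j =>
            fderiv ℝ (fun q => fderiv ℝ U q (0, Pi.single a 1, 0)) (t, y, grad (φ t y) ρ)
              (0, 0, Pi.single j 1))) := by
    intro a
    rw [hGa_eq a, Matrix.mulVec_neg, posdef_inv_mulVec (hpos t ht y hy ρ), dotp_neg_neg]
  -- final assembly
  rw [hdtφ, hdtu, hlapφ, hlapu, hDt₀]
  rw [Finset.sum_congr rfl fun a _ => hsum3 a]
  rw [Finset.sum_congr rfl (fun a (_ : a ∈ Finset.univ) => by rw [hsecond a, hGa2 a])]
  rw [Finset.sum_congr rfl fun a _ => (neg_add _ _ : -(_ + -(dotp _ _)) = _)]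
  rw [Finset.sum_add_distrib, Finset.sum_neg_distrib]
  ring

end Key

/-- **Legendre duality of geometric flows.**  A smooth family `φ(t,y,ρ)` evolves by the
torus-invariant Eells–Sampson harmonic map flow iff the family of fiberwise Legendre
transforms `u(t,y,x)` evolves by the linear heat flow `∂_t u = Δ_y u`. -/
theorem eells_sampson_flow_iff_heat_flow
    {m n : ℕ} (hm : 1 ≤ m) (hn : 1 ≤ n)
    (I : Set ℝ) (a b : ℝ) (hI : I = Set.Ioo a b)
    (Ω : Set (Fin n → ℝ)) (hΩ : IsOpen Ω)
    (P : Set (Fin m → ℝ)) (hP : IsOpen P)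
    (φ : ℝ → (Fin n → ℝ) → (Fin m → ℝ) → ℝ)
    (hφ : ContDiffOn ℝ (⊤ : ℕ∞)
      (fun p : ℝ × (Fin n → ℝ) × (Fin m → ℝ) => φ p.1 p.2.1 p.2.2)
      (I ×ˢ Ω ×ˢ Set.univ))
    (hpos : ∀ t ∈ I, ∀ y ∈ Ω, ∀ ρ : Fin m → ℝ, (hess (φ t y) ρ).PosDef)
    (R : ℝ → (Fin n → ℝ) → (Fin m → ℝ) → (Fin m → ℝ))
    (hmem : ∀ t ∈ I, ∀ y ∈ Ω, ∀ ρ : Fin m → ℝ, grad (φ t y) ρ ∈ P)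
    (hR₁ : ∀ t ∈ I, ∀ y ∈ Ω, ∀ x ∈ P, grad (φ t y) (R t y x) = x)
    (hR₂ : ∀ t ∈ I, ∀ y ∈ Ω, ∀ ρ : Fin m → ℝ, R t y (grad (φ t y) ρ) = ρ)
    (u : ℝ → (Fin n → ℝ) → (Fin m → ℝ) → ℝ)
    (hu : ∀ t ∈ I, ∀ y ∈ Ω, ∀ x ∈ P,
      u t y x = dotp x (R t y x) - φ t y (R t y x))
    (husm : ContDiffOn ℝ (⊤ : ℕ∞)
      (fun p : ℝ × (Fin n → ℝ) × (Fin m → ℝ) => u p.1 p.2.1 p.2.2)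
      (I ×ˢ Ω ×ˢ P)) :
    (∀ t ∈ I, ∀ y ∈ Ω, ∀ ρ : Fin m → ℝ,
        deriv (fun t' => φ t' y ρ) t
          = lap (fun y' => φ t y' ρ) y
            - ∑ c : Fin n,
                dotp
                  ((hess (φ t y) ρ)⁻¹.mulVec
                    (grad (fun ρ' => pd (fun y' => φ t y' ρ') c y) ρ))
                  (grad (fun ρ' => pd (fun y' => φ t y' ρ') c y) ρ))
      ↔ (∀ t ∈ I, ∀ y ∈ Ω, ∀ x ∈ P,
          deriv (fun t' => u t' y x) t = lap (fun y' => u t y' x) y) := by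
  
  have hIo : IsOpen I := by rw [hI]; exact isOpen_Ioo
  have hmaster : ∀ t ∈ I, ∀ y ∈ Ω, ∀ ρ : Fin m → ℝ,
      φ t y ρ = dotp (grad (φ t y) ρ) ρ - u t y (grad (φ t y) ρ) := by
    intro t ht y hy ρ
    have h := hu t ht y hy (grad (φ t y) ρ) (hmem t ht y hy ρ)
    rw [hR₂ t ht y hy ρ] at h
    linarith
  constructor
  · intro hES t ht y hy x hx
    have hkey := key hIo hΩ hP hφ hpos hmem husm hmaster ht hy (R t y x)
    rw [hR₁ t ht y hy x hx] at hkey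
    have h0 := hES t ht y hy (R t y x)
    linarith
  · intro hHeat t ht y hy ρ
    have hkey := key hIo hΩ hP hφ hpos hmem husm hmaster ht hy ρ
    have h0 := hHeat t ht y hy (grad (φ t y) ρ) (hmem t ht y hy ρ)
    linarith
end
end

section
/- Second variation of the Legendre transform: for every t ∈ I and x ∈ P, letting ρ = ρ(t,x) = (∇_ρφ(t,·))⁻¹(x), one has ∂²u/∂t²(t,x) + ∂²φ/∂t²(t,ρ) + ⟨∇_ρ(∂_tφ)(t,ρ), ∇_x(∂_tu)(t,x)⟩ = 0; equivalently, ∂²u/∂t²(t,x) = −∂²φ/∂t²(t,ρ) + ⟨(∇²_ρφ(t,ρ))⁻¹ ∇_ρ(∂_tφ)(t,ρ), ∇_ρ(∂_tφ)(t,ρ)⟩. -/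
open scoped BigOperators
open MeasureTheory Real

noncomputable section

lemma aux_deriv_slice {m : ℕ} {Ψ : ℝ × (Fin m → ℝ) → ℝ} {c : ℝ} {y : Fin m → ℝ}
    (h : DifferentiableAt ℝ Ψ (c, y)) :
    deriv (fun s => Ψ (s, y)) c = fderiv ℝ Ψ (c, y) (1, 0) := by
  have h1 : HasFDerivAt (fun s : ℝ => Ψ (s, y))
      ((fderiv ℝ Ψ (c, y)).comp (ContinuousLinearMap.inl ℝ ℝ (Fin m → ℝ))) c :=
    h.hasFDerivAt.comp c (hasFDerivAt_prodMk_left c y)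
  simpa using h1.hasDerivAt.deriv

lemma aux_pd_slice {m : ℕ} {Ψ : ℝ × (Fin m → ℝ) → ℝ} {c : ℝ} {y : Fin m → ℝ}
    (h : DifferentiableAt ℝ Ψ (c, y)) (i : Fin m) :
    pd (fun z => Ψ (c, z)) i y = fderiv ℝ Ψ (c, y) (0, Pi.single i 1) := by
  have h1 : HasFDerivAt (fun z => Ψ (c, z))
      ((fderiv ℝ Ψ (c, y)).comp (ContinuousLinearMap.inr ℝ ℝ (Fin m → ℝ))) y :=
    h.hasFDerivAt.comp y (hasFDerivAt_prodMk_right c y)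
  rw [pd, h1.fderiv]
  simp

lemma aux_vec_decomp {m : ℕ} (w : Fin m → ℝ) :
    ((0 : ℝ), w) = ∑ j, w j • ((0:ℝ), (Pi.single j 1 : Fin m → ℝ)) := by
  ext k
  · simp [Prod.fst_sum]
  · simp [Prod.snd_sum, Finset.sum_apply, Pi.single_apply]

lemma aux_decomp {m : ℕ} (B : (ℝ × (Fin m → ℝ)) →L[ℝ] ℝ) (v : ℝ × (Fin m → ℝ)) :
    B v = v.1 * B (1, 0) + ∑ j, v.2 j * B (0, Pi.single j 1) := by
  have hv : v = v.1 • ((1:ℝ), (0 : Fin m → ℝ)) + ((0:ℝ), v.2) := by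
    ext <;> simp
  nth_rewrite 1 [hv]
  rw [map_add, _root_.map_smul, aux_vec_decomp v.2, map_sum]
  congr 1
  refine Finset.sum_congr rfl fun j _ => ?_
  rw [_root_.map_smul, smul_eq_mul]

lemma aux_decomp0 {m : ℕ} (B : (ℝ × (Fin m → ℝ)) →L[ℝ] ℝ) (w : Fin m → ℝ) :
    B (0, w) = ∑ j, w j * B (0, Pi.single j 1) := by
  have := aux_decomp B (0, w)
  simpa using this

set_option maxHeartbeats 2000000 in
/-- **Second variation of the Legendre transform:** with `ρ = ρ(t,x) = (∇_ρφ(t,·))⁻¹(x)`,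
`∂²u/∂t²(t,x) + ∂²φ/∂t²(t,ρ) + ⟨∇_ρ(∂_tφ)(t,ρ), ∇_x(∂_tu)(t,x)⟩ = 0`, equivalently
`∂²u/∂t²(t,x) = −∂²φ/∂t²(t,ρ) + ⟨(∇²_ρφ(t,ρ))⁻¹ ∇_ρ(∂_tφ)(t,ρ), ∇_ρ(∂_tφ)(t,ρ)⟩`. -/
theorem legendre_second_variation
    {m : ℕ} (hm : 1 ≤ m)
    (I : Set ℝ) (a b : ℝ) (hI : I = Set.Ioo a b)
    (P : Set (Fin m → ℝ)) (hP : IsOpen P)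
    (φ : ℝ → (Fin m → ℝ) → ℝ)
    (hφ : ContDiffOn ℝ (⊤ : ℕ∞)
      (fun p : ℝ × (Fin m → ℝ) => φ p.1 p.2) (I ×ˢ Set.univ))
    (hpos : ∀ t ∈ I, ∀ ρ : Fin m → ℝ, (hess (φ t) ρ).PosDef)
    (R : ℝ → (Fin m → ℝ) → (Fin m → ℝ))
    (hmem : ∀ t ∈ I, ∀ ρ : Fin m → ℝ, grad (φ t) ρ ∈ P)
    (hR₁ : ∀ t ∈ I, ∀ x ∈ P, grad (φ t) (R t x) = x)
    (hR₂ : ∀ t ∈ I, ∀ ρ : Fin m → ℝ, R t (grad (φ t) ρ) = ρ)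
    (u : ℝ → (Fin m → ℝ) → ℝ)
    (hu : ∀ t ∈ I, ∀ x ∈ P, u t x = dotp x (R t x) - φ t (R t x))
    (husm : ContDiffOn ℝ (⊤ : ℕ∞)
      (fun p : ℝ × (Fin m → ℝ) => u p.1 p.2) (I ×ˢ P)) :
    ∀ t ∈ I, ∀ x ∈ P,
      deriv (fun t' => deriv (fun s => u s x) t') t
          + deriv (fun t' => deriv (fun s => φ s (R t x)) t') t
          + dotp (grad (fun ρ' => deriv (fun s => φ s ρ') t) (R t x))
              (grad (fun x' => deriv (fun s => u s x') t) x)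
        = 0
      ∧ deriv (fun t' => deriv (fun s => u s x) t') t
          = -(deriv (fun t' => deriv (fun s => φ s (R t x)) t') t)
            + dotp
                ((hess (φ t) (R t x))⁻¹.mulVec
                  (grad (fun ρ' => deriv (fun s => φ s ρ') t) (R t x)))
                (grad (fun ρ' => deriv (fun s => φ s ρ') t) (R t x)) := by
  classical
  intro t ht x hx
  have hIopen : IsOpen I := by rw [hI]; exact isOpen_Ioo
  set Φ : ℝ × (Fin m → ℝ) → ℝ := fun p => φ p.1 p.2 with hΦdef
  have hSopen : IsOpen (I ×ˢ (Set.univ : Set (Fin m → ℝ))) := hIopen.prod isOpen_univ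
  have hSP : IsOpen (I ×ˢ P) := hIopen.prod hP
  have hone : ((⊤ : ℕ∞) : WithTop ℕ∞) ≠ 0 := by simp
  have htwo : (2 : WithTop ℕ∞) ≤ ((⊤ : ℕ∞) : WithTop ℕ∞) := by decide
  have htop : ((⊤ : ℕ∞) : WithTop ℕ∞) + 1 ≤ ((⊤ : ℕ∞) : WithTop ℕ∞) := by
    norm_num
  have hΦat : ∀ q : ℝ × (Fin m → ℝ), q.1 ∈ I → ContDiffAt ℝ (⊤:ℕ∞) Φ q :=
    fun q hq => hφ.contDiffAt (hSopen.mem_nhds ⟨hq, trivial⟩)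
  have hΦ'at : ∀ q : ℝ × (Fin m → ℝ), q.1 ∈ I → ContDiffAt ℝ (⊤:ℕ∞) (fderiv ℝ Φ) q :=
    fun q hq => (hΦat q hq).fderiv_right htop
  have hgrad : ∀ (s : ℝ), s ∈ I → ∀ (z : Fin m → ℝ) (i : Fin m),
      pd (φ s) i z = fderiv ℝ Φ (s, z) (0, Pi.single i 1) :=
    fun s hs z i => aux_pd_slice ((hΦat (s, z) hs).differentiableAt hone) i
  have hderivφ : ∀ (s : ℝ), s ∈ I → ∀ z : Fin m → ℝ,
      deriv (fun s' => φ s' z) s = fderiv ℝ Φ (s, z) (1, 0) :=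
    fun s hs z => aux_deriv_slice ((hΦat (s, z) hs).differentiableAt hone)
  have hhessB : ∀ q : ℝ × (Fin m → ℝ), q.1 ∈ I → ∀ i j,
      hess (φ q.1) q.2 i j
        = fderiv ℝ (fderiv ℝ Φ) q (0, Pi.single i 1) (0, Pi.single j 1) := by
    intro q hq i j
    have hfe : (fun z => pd (φ q.1) j z)
        = fun z => (fun r => fderiv ℝ Φ r ((0:ℝ), (Pi.single j 1 : Fin m → ℝ))) (q.1, z) :=
      funext fun z => hgrad q.1 hq z j
    have hdiff : DifferentiableAt ℝ
        (fun r => fderiv ℝ Φ r ((0:ℝ), (Pi.single j 1 : Fin m → ℝ))) (q.1, q.2) :=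
      ((hΦ'at q hq).differentiableAt hone).clm_apply (differentiableAt_const _)
    show pd (fun z => pd (φ q.1) j z) i q.2 = _
    rw [hfe, aux_pd_slice hdiff i]
    rw [fderiv_clm_apply ((hΦ'at q hq).differentiableAt hone) (differentiableAt_const _)]
    simp
  have hE2' : ∀ p : ℝ × (Fin m → ℝ), p.1 ∈ I → p.2 ∈ P → ∀ j,
      fderiv ℝ Φ (p.1, R p.1 p.2) (0, Pi.single j 1) = p.2 j := by
    intro p hp1 hp2 j
    have h1 := hR₁ p.1 hp1 p.2 hp2
    rw [← hgrad p.1 hp1 (R p.1 p.2) j]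
    exact congrFun h1 j
  set Rf : ℝ × (Fin m → ℝ) → Fin m → ℝ := fun p => R p.1 p.2 with hRfdef
  have hRsm : ∀ p : ℝ × (Fin m → ℝ), p.1 ∈ I → p.2 ∈ P → ContDiffAt ℝ (⊤:ℕ∞) Rf p := by
    intro p hp1 hp2
    set q₀ : ℝ × (Fin m → ℝ) := (p.1, Rf p) with hq₀def
    set F : ℝ × (Fin m → ℝ) → ℝ × (Fin m → ℝ) :=
      fun q => (q.1, fun i => fderiv ℝ Φ q (0, Pi.single i 1)) with hFdef
    have hFq₀ : F q₀ = p := by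
      have h1 := hR₁ p.1 hp1 p.2 hp2
      have h2 : (fun i => fderiv ℝ Φ q₀ (0, Pi.single i 1)) = grad (φ p.1) (Rf p) :=
        funext fun i => (hgrad p.1 hp1 (Rf p) i).symm
      show (q₀.1, fun i => fderiv ℝ Φ q₀ (0, Pi.single i 1)) = p
      rw [h2]
      show (p.1, grad (φ p.1) (R p.1 p.2)) = p
      rw [show grad (φ p.1) (R p.1 p.2) = p.2 from h1]
    have hFat : ContDiffAt ℝ (⊤:ℕ∞) F q₀ :=
      contDiffAt_fst.prodMk (contDiffAt_pi.2 fun i =>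
        (hΦ'at q₀ hp1).clm_apply contDiffAt_const)
    have hB' : HasFDerivAt (fderiv ℝ Φ) (fderiv ℝ (fderiv ℝ Φ) q₀) q₀ :=
      ((hΦ'at q₀ hp1).differentiableAt hone).hasFDerivAt
    set B : (ℝ × (Fin m → ℝ)) →L[ℝ] (ℝ × (Fin m → ℝ)) →L[ℝ] ℝ :=
      fderiv ℝ (fderiv ℝ Φ) q₀ with hBdef
    set L : (ℝ × (Fin m → ℝ)) →L[ℝ] ℝ × (Fin m → ℝ) :=
      (ContinuousLinearMap.fst ℝ ℝ (Fin m → ℝ)).prod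
        (ContinuousLinearMap.pi fun i => B.flip (0, Pi.single i 1)) with hLdef
    have hFL : HasFDerivAt F L q₀ := by
      refine HasFDerivAt.prodMk hasFDerivAt_fst ?_
      refine hasFDerivAt_pi.2 fun i => ?_
      have h := hB'.clm_apply (hasFDerivAt_const ((0:ℝ), (Pi.single i 1 : Fin m → ℝ)) q₀)
      simpa using h
    have hHpos := hpos p.1 hp1 (Rf p)
    have hHB : ∀ i j, hess (φ p.1) (Rf p) i j = B (0, Pi.single i 1) (0, Pi.single j 1) :=
      fun i j => hhessB q₀ hp1 i j
    have hLker : ∀ v : ℝ × (Fin m → ℝ), L v = 0 → v = 0 := by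
      intro v hv
      have hv1 : v.1 = 0 := congrArg Prod.fst hv
      have hv2 : ∀ j, B v (0, Pi.single j 1) = 0 := by
        intro j
        have h3 := congrFun (congrArg Prod.snd hv) j
        simpa [hLdef] using h3
      have hveq : ((0:ℝ), v.2) = v := by
        ext
        · exact hv1.symm
        · rfl
      have hv2' : v.2 = 0 := by
        by_contra hne
        have hposv := hHpos.dotProduct_mulVec_pos hne
        have hquad : dotProduct (star v.2) (Matrix.mulVec (hess (φ p.1) (Rf p)) v.2) = 0 := by
          have hstar : star v.2 = v.2 := by
            funext k; simp
          rw [hstar]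
          have hexp : ∀ i, (Matrix.mulVec (hess (φ p.1) (Rf p)) v.2) i = B (0, Pi.single i 1) (0, v.2) := by
            intro i
            have he : (Matrix.mulVec (hess (φ p.1) (Rf p)) v.2) i
                = ∑ j, v.2 j * B (0, Pi.single i 1) (0, Pi.single j 1) := by
              simp only [Matrix.mulVec, dotProduct, hHB]
              exact Finset.sum_congr rfl fun j _ => mul_comm _ _
            rw [he, ← aux_decomp0 (B (0, Pi.single i 1)) v.2]
          have : dotProduct v.2 (Matrix.mulVec (hess (φ p.1) (Rf p)) v.2)
              = ∑ i, v.2 i * B (0, Pi.single i 1) (0, v.2) := by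
            refine Finset.sum_congr rfl fun i _ => ?_
            rw [hexp i]
          rw [this]
          have h4 := aux_decomp0 (B.flip ((0:ℝ), v.2)) v.2
          simp only [ContinuousLinearMap.flip_apply] at h4
          rw [← h4]
          have h5 : B ((0:ℝ), v.2) ((0:ℝ), v.2) = ∑ j, v.2 j * B ((0:ℝ), v.2) (0, Pi.single j 1) :=
            aux_decomp0 (B ((0:ℝ), v.2)) v.2
          rw [h5]
          refine Finset.sum_eq_zero fun j _ => ?_
          rw [hveq, hv2 j, mul_zero]
        exact absurd hquad (ne_of_gt hposv)
      exact Prod.ext_iff.mpr ⟨hv1, hv2'⟩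
    have hLinj : Function.Injective L := by
      intro v w hvw
      have h6 := hLker (v - w) (by rw [map_sub, hvw, sub_self])
      exact sub_eq_zero.mp h6
    have hLsurj : Function.Surjective L :=
      LinearMap.injective_iff_surjective.mp hLinj
    let Leq : (ℝ × (Fin m → ℝ)) ≃L[ℝ] ℝ × (Fin m → ℝ) :=
      (LinearEquiv.ofBijective (L : (ℝ × (Fin m → ℝ)) →ₗ[ℝ] ℝ × (Fin m → ℝ))
        ⟨hLinj, hLsurj⟩).toContinuousLinearEquiv
    have hLeq : (Leq : (ℝ × (Fin m → ℝ)) →L[ℝ] ℝ × (Fin m → ℝ)) = L :=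
      ContinuousLinearMap.ext fun v => rfl
    have hFL' : HasFDerivAt F (Leq : (ℝ × (Fin m → ℝ)) →L[ℝ] ℝ × (Fin m → ℝ)) q₀ := by
      rw [hLeq]; exact hFL
    have hstrict : HasStrictFDerivAt F
        ((Leq : (ℝ × (Fin m → ℝ)) →L[ℝ] ℝ × (Fin m → ℝ))) q₀ :=
      hFat.hasStrictFDerivAt' hFL' hone
    have hgsm : ContDiffAt ℝ (⊤:ℕ∞) (hFat.localInverse hFL' hone) (F q₀) :=
      hFat.to_localInverse hFL' hone
    set g : ℝ × (Fin m → ℝ) → ℝ × (Fin m → ℝ) := hFat.localInverse hFL' hone with hgdef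
    have hright : ∀ᶠ y in nhds (F q₀), F (g y) = y := hstrict.eventually_right_inverse
    have hcont : ContinuousAt g (F q₀) := hstrict.localInverse_continuousAt
    have himg : g (F q₀) = q₀ := hstrict.localInverse_apply_image
    rw [hFq₀] at hright hcont hgsm himg
    have hev1 : ∀ᶠ y in nhds p, (g y).1 ∈ I := by
      have h7 : (g ⁻¹' (Prod.fst ⁻¹' I)) ∈ nhds p :=
        hcont.preimage_mem_nhds ((hIopen.preimage continuous_fst).mem_nhds
          (by rw [himg]; exact hp1))
      exact h7
    have hRg : Rf =ᶠ[nhds p] fun y => (g y).2 := by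
      filter_upwards [hright, hev1, hSP.eventually_mem ⟨hp1, hp2⟩] with y h1 h2 h3
      have h1' : (((g y).1, fun i => fderiv ℝ Φ (g y) (0, Pi.single i 1)) : ℝ × (Fin m → ℝ)) = y := h1
      have hy1 : (g y).1 = y.1 := (Prod.ext_iff.mp h1').1
      have hy2 : (fun i => fderiv ℝ Φ (g y) (0, Pi.single i 1)) = y.2 := (Prod.ext_iff.mp h1').2
      have hgradgy : grad (φ (g y).1) ((g y).2) = y.2 := by
        rw [← hy2]
        exact funext fun i => hgrad (g y).1 h2 ((g y).2) i
      show R y.1 y.2 = (g y).2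
      have h8 : y.2 = grad (φ y.1) ((g y).2) := by rw [← hgradgy, hy1]
      rw [h8, hR₂ y.1 h3.1 ((g y).2)]
    exact (contDiff_snd.contDiffAt.comp p hgsm).congr_of_eventuallyEq hRg
  set U : ℝ × (Fin m → ℝ) → ℝ := fun p => u p.1 p.2 with hUdef
  have hUat : ∀ q : ℝ × (Fin m → ℝ), q.1 ∈ I → q.2 ∈ P → ContDiffAt ℝ (⊤:ℕ∞) U q :=
    fun q h1 h2 => husm.contDiffAt (hSP.mem_nhds ⟨h1, h2⟩)
  have hUfd : ∀ p : ℝ × (Fin m → ℝ), p.1 ∈ I → p.2 ∈ P → ∀ v : ℝ × (Fin m → ℝ),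
      fderiv ℝ U p v = dotp v.2 (R p.1 p.2) - v.1 * fderiv ℝ Φ (p.1, R p.1 p.2) (1, 0) := by
    intro p hp1 hp2 v
    have hRd : DifferentiableAt ℝ Rf p := (hRsm p hp1 hp2).differentiableAt hone
    have hqmp : HasFDerivAt (fun p' : ℝ × (Fin m → ℝ) => (p'.1, Rf p'))
        ((ContinuousLinearMap.fst ℝ ℝ (Fin m → ℝ)).prod (fderiv ℝ Rf p)) p :=
      hasFDerivAt_fst.prodMk hRd.hasFDerivAt
    have hΦd : HasFDerivAt Φ (fderiv ℝ Φ (p.1, Rf p)) (p.1, Rf p) :=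
      ((hΦat (p.1, Rf p) hp1).differentiableAt hone).hasFDerivAt
    have hprod : HasFDerivAt (fun p' : ℝ × (Fin m → ℝ) => dotp p'.2 (Rf p'))
        (∑ j, (p.2 j • ((ContinuousLinearMap.proj j).comp (fderiv ℝ Rf p))
          + Rf p j • ((ContinuousLinearMap.proj j).comp (ContinuousLinearMap.snd ℝ ℝ (Fin m → ℝ))))) p := by
      show HasFDerivAt (fun p' : ℝ × (Fin m → ℝ) => ∑ j, p'.2 j * Rf p' j) _ p
      refine HasFDerivAt.fun_sum fun j _ => ?_
      have hc : HasFDerivAt (fun p' : ℝ × (Fin m → ℝ) => p'.2 j)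
          ((ContinuousLinearMap.proj j).comp (ContinuousLinearMap.snd ℝ ℝ (Fin m → ℝ))) p :=
        ((ContinuousLinearMap.proj (R := ℝ) j).comp (ContinuousLinearMap.snd ℝ ℝ (Fin m → ℝ))).hasFDerivAt
      have hd : HasFDerivAt (fun p' : ℝ × (Fin m → ℝ) => Rf p' j)
          ((ContinuousLinearMap.proj j).comp (fderiv ℝ Rf p)) p := by
        have := (ContinuousLinearMap.proj (R := ℝ) (φ := fun _ : Fin m => ℝ) j).hasFDerivAt.comp p hRd.hasFDerivAt
        exact this
      exact hc.mul hd
    have hUev : U =ᶠ[nhds p] fun p' => (fun p' : ℝ × (Fin m → ℝ) => dotp p'.2 (Rf p')) p' - Φ (p'.1, Rf p') := by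
      filter_upwards [hSP.eventually_mem ⟨hp1, hp2⟩] with y hy
      exact hu y.1 hy.1 y.2 hy.2
    have hUd := ((hprod.sub (hΦd.comp p hqmp)).congr_of_eventuallyEq hUev)
    rw [hUd.fderiv]
    have hval : fderiv ℝ Φ (p.1, Rf p) (v.1, fderiv ℝ Rf p v)
        = v.1 * fderiv ℝ Φ (p.1, Rf p) (1, 0) + ∑ j, fderiv ℝ Rf p v j * p.2 j := by
      rw [aux_decomp (fderiv ℝ Φ (p.1, Rf p)) (v.1, fderiv ℝ Rf p v)]
      congr 1
      exact Finset.sum_congr rfl fun j _ => by rw [hE2' p hp1 hp2 j]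
    have hsum : (∑ j, (p.2 j • ((ContinuousLinearMap.proj j).comp (fderiv ℝ Rf p))
          + Rf p j • ((ContinuousLinearMap.proj j).comp (ContinuousLinearMap.snd ℝ ℝ (Fin m → ℝ))))) v
        = ∑ j, (p.2 j * fderiv ℝ Rf p v j + Rf p j * v.2 j) := by
      simp
    simp only [ContinuousLinearMap.sub_apply, ContinuousLinearMap.comp_apply,
      ContinuousLinearMap.prod_apply, ContinuousLinearMap.coe_fst', hsum]
    rw [hval, Finset.sum_add_distrib]
    have e1 : ∑ j, Rf p j * v.2 j = dotp v.2 (R p.1 p.2) :=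
      Finset.sum_congr rfl fun j _ => mul_comm _ _
    have e2 : ∑ j, p.2 j * fderiv ℝ Rf p v j = ∑ j, fderiv ℝ Rf p v j * p.2 j :=
      Finset.sum_congr rfl fun j _ => mul_comm _ _
    rw [e1, e2]
    ring
  have hut : ∀ (c : ℝ) (y : Fin m → ℝ), c ∈ I → y ∈ P →
      deriv (fun s => u s y) c = -(fderiv ℝ Φ (c, R c y) (1, 0)) := by
    intro c y hc hy
    have hd : DifferentiableAt ℝ U (c, y) := (hUat (c, y) hc hy).differentiableAt hone
    have h9 : deriv (fun s => U (s, y)) c = fderiv ℝ U (c, y) (1, 0) := aux_deriv_slice hd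
    rw [show (fun s => u s y) = fun s => U (s, y) from rfl, h9,
      hUfd (c, y) hc hy (1, 0)]
    simp [dotp]
  -- point-specific quantities
  set ρ₀ : Fin m → ℝ := R t x with hρ₀def
  set q₀ : ℝ × (Fin m → ℝ) := (t, ρ₀) with hq₀def
  set p₀ : ℝ × (Fin m → ℝ) := (t, x) with hp₀def
  set B : (ℝ × (Fin m → ℝ)) →L[ℝ] (ℝ × (Fin m → ℝ)) →L[ℝ] ℝ :=
    fderiv ℝ (fderiv ℝ Φ) q₀ with hBdef
  have hsymm : ∀ v w, B v w = B w v := fun v w =>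
    (hΦat q₀ ht).isSymmSndFDerivAt (by rw [minSmoothness_of_isRCLikeNormedField]; exact htwo) v w
  have hRp₀ : ContDiffAt ℝ (⊤:ℕ∞) Rf p₀ := hRsm p₀ ht hx
  have hRdiff : DifferentiableAt ℝ Rf p₀ := hRp₀.differentiableAt hone
  set R' : (ℝ × (Fin m → ℝ)) →L[ℝ] (Fin m → ℝ) := fderiv ℝ Rf p₀ with hR'def
  set τ : Fin m → ℝ := R' (1, 0) with hτdef
  set σ : Fin m → Fin m → ℝ := fun i => R' (0, Pi.single i 1) with hσdef
  set G : Fin m → ℝ := fun j => B (0, Pi.single j 1) (1, 0) with hGdef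
  have hqm : HasFDerivAt (fun p : ℝ × (Fin m → ℝ) => (p.1, Rf p))
      ((ContinuousLinearMap.fst ℝ ℝ (Fin m → ℝ)).prod R') p₀ :=
    hasFDerivAt_fst.prodMk hRdiff.hasFDerivAt
  have hA : HasFDerivAt (fun r : ℝ × (Fin m → ℝ) => fderiv ℝ Φ r ((1:ℝ), (0 : Fin m → ℝ)))
      (B.flip (1, 0)) q₀ := by
    have h := (((hΦ'at q₀ ht).differentiableAt hone).hasFDerivAt).clm_apply
      (hasFDerivAt_const ((1:ℝ), (0 : Fin m → ℝ)) q₀)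
    simpa using h
  set W : ℝ × (Fin m → ℝ) → ℝ := fun p => -(fderiv ℝ Φ (p.1, Rf p) (1, 0)) with hWdef
  have hW : HasFDerivAt W
      (-((B.flip (1, 0)).comp ((ContinuousLinearMap.fst ℝ ℝ (Fin m → ℝ)).prod R'))) p₀ :=
    (hA.comp p₀ hqm).neg
  -- differentiated inverse relation
  have hkey2 : ∀ (j : Fin m) (v : ℝ × (Fin m → ℝ)), B (v.1, R' v) (0, Pi.single j 1) = v.2 j := by
    intro j v
    have hAj : HasFDerivAt (fun r : ℝ × (Fin m → ℝ) => fderiv ℝ Φ r ((0:ℝ), (Pi.single j 1 : Fin m → ℝ)))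
        (B.flip (0, Pi.single j 1)) q₀ := by
      have h := (((hΦ'at q₀ ht).differentiableAt hone).hasFDerivAt).clm_apply
        (hasFDerivAt_const ((0:ℝ), (Pi.single j 1 : Fin m → ℝ)) q₀)
      simpa using h
    have hcomp : HasFDerivAt
        (fun p : ℝ × (Fin m → ℝ) => fderiv ℝ Φ (p.1, Rf p) ((0:ℝ), (Pi.single j 1 : Fin m → ℝ)))
        ((B.flip (0, Pi.single j 1)).comp ((ContinuousLinearMap.fst ℝ ℝ (Fin m → ℝ)).prod R')) p₀ :=
      by have := hAj.comp p₀ hqm; exact this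
    have hsnd : HasFDerivAt (fun p : ℝ × (Fin m → ℝ) => p.2 j)
        ((ContinuousLinearMap.proj j).comp (ContinuousLinearMap.snd ℝ ℝ (Fin m → ℝ))) p₀ :=
      ((ContinuousLinearMap.proj (R := ℝ) j).comp (ContinuousLinearMap.snd ℝ ℝ (Fin m → ℝ))).hasFDerivAt
    have hev9 : (fun p : ℝ × (Fin m → ℝ) => p.2 j) =ᶠ[nhds p₀]
        fun p => fderiv ℝ Φ (p.1, Rf p) ((0:ℝ), (Pi.single j 1 : Fin m → ℝ)) := by
      filter_upwards [hSP.eventually_mem (Set.mk_mem_prod ht hx)] with y hy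
      exact (hE2' y hy.1 hy.2 j).symm
    have hequ := (hcomp.congr_of_eventuallyEq hev9).unique hsnd
    have h10 := congrArg (fun M : (ℝ × (Fin m → ℝ)) →L[ℝ] ℝ => M v) hequ
    simpa using h10
  -- T1
  have hT1 : deriv (fun t' => deriv (fun s => u s x) t') t = -(B (1, τ) (1, 0)) := by
    have hev : (fun t' => deriv (fun s => u s x) t') =ᶠ[nhds t] fun t' => W (t', x) := by
      filter_upwards [hIopen.eventually_mem ht] with s hs
      exact hut s x hs hx
    rw [hev.deriv_eq]
    have h11 : deriv (fun s => W (s, x)) t = fderiv ℝ W (t, x) (1, 0) :=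
      aux_deriv_slice hW.differentiableAt
    rw [h11, hW.fderiv]
    simp [hτdef]
  -- T2
  have hT2 : deriv (fun t' => deriv (fun s => φ s ρ₀) t') t = B (1, 0) (1, 0) := by
    have hev : (fun t' => deriv (fun s => φ s ρ₀) t') =ᶠ[nhds t]
        fun t' => fderiv ℝ Φ (t', ρ₀) ((1:ℝ), (0 : Fin m → ℝ)) := by
      filter_upwards [hIopen.eventually_mem ht] with s hs
      exact hderivφ s hs ρ₀
    rw [hev.deriv_eq]
    have h12 : deriv (fun s => fderiv ℝ Φ (s, ρ₀) ((1:ℝ), (0 : Fin m → ℝ))) t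
        = fderiv ℝ (fun r : ℝ × (Fin m → ℝ) => fderiv ℝ Φ r ((1:ℝ), (0 : Fin m → ℝ))) (t, ρ₀) (1, 0) :=
      aux_deriv_slice hA.differentiableAt
    rw [h12, hA.fderiv]
    simp
  -- gradient of ∂ₜφ
  have hGeq : grad (fun ρ' => deriv (fun s => φ s ρ') t) ρ₀ = G := by
    funext j
    show pd (fun ρ' => deriv (fun s => φ s ρ') t) j ρ₀ = G j
    have hfe : (fun ρ' => deriv (fun s => φ s ρ') t)
        = fun ρ' => (fun r : ℝ × (Fin m → ℝ) => fderiv ℝ Φ r ((1:ℝ), (0 : Fin m → ℝ))) (t, ρ') :=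
      funext fun ρ' => hderivφ t ht ρ'
    rw [hfe, aux_pd_slice hA.differentiableAt j, hA.fderiv]
    simp [hGdef]
  -- decomposition facts
  have hsplit : ∀ w : ℝ × (Fin m → ℝ), B ((1:ℝ), τ) w = B (1, 0) w + B (0, τ) w := by
    intro w
    rw [show ((1:ℝ), τ) = ((1:ℝ), (0 : Fin m → ℝ)) + ((0:ℝ), τ) from by ext <;> simp,
      map_add, ContinuousLinearMap.add_apply]
  have hBw10 : ∀ w : Fin m → ℝ, B (0, w) (1, 0) = ∑ k, w k * G k := by
    intro w
    have h13 := aux_decomp0 (B.flip ((1:ℝ), (0 : Fin m → ℝ))) w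
    simp only [ContinuousLinearMap.flip_apply] at h13
    exact h13
  have hBw0j : ∀ (w : Fin m → ℝ) (j : Fin m), B (0, w) (0, Pi.single j 1)
      = ∑ k, w k * B (0, Pi.single k 1) (0, Pi.single j 1) := by
    intro w j
    have h13 := aux_decomp0 (B.flip ((0:ℝ), (Pi.single j 1 : Fin m → ℝ))) w
    simp only [ContinuousLinearMap.flip_apply] at h13
    exact h13
  have hr1 : ∀ j, G j + ∑ k, τ k * B (0, Pi.single k 1) (0, Pi.single j 1) = 0 := by
    intro j
    have h14 := hkey2 j (1, 0)
    rw [show (((1:ℝ), (0 : Fin m → ℝ)).1, R' ((1:ℝ), (0 : Fin m → ℝ))) = ((1:ℝ), τ) from rfl] at h14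
    rw [hsplit (0, Pi.single j 1), hBw0j τ j] at h14
    have h15 : B ((1:ℝ), (0 : Fin m → ℝ)) (0, Pi.single j 1) = G j := hsymm _ _
    rw [h15] at h14
    simpa using h14
  have hr2 : ∀ i j, ∑ k, σ i k * B (0, Pi.single k 1) (0, Pi.single j 1) = (Pi.single i 1 : Fin m → ℝ) j := by
    intro i j
    have h14 := hkey2 j (0, Pi.single i 1)
    rw [show (((0:ℝ), (Pi.single i 1 : Fin m → ℝ)).1, R' ((0:ℝ), (Pi.single i 1 : Fin m → ℝ)))
        = ((0:ℝ), σ i) from rfl] at h14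
    rw [hBw0j (σ i) j] at h14
    exact h14
  have hτval : ∀ i, -(B ((0:ℝ), σ i) (1, 0)) = τ i := by
    intro i
    rw [hBw10 (σ i)]
    have e2 : ∀ k, G k = -(∑ l, τ l * B (0, Pi.single l 1) (0, Pi.single k 1)) := by
      intro k
      have := hr1 k
      linarith
    have e3 : ∑ k, σ i k * G k
        = -(∑ k, σ i k * (∑ l, τ l * B (0, Pi.single l 1) (0, Pi.single k 1))) := by
      rw [← Finset.sum_neg_distrib]
      exact Finset.sum_congr rfl fun k _ => by rw [e2 k]; ring
    rw [e3, neg_neg]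
    have hswap : ∑ k, σ i k * (∑ l, τ l * B (0, Pi.single l 1) (0, Pi.single k 1))
        = ∑ l, τ l * (∑ k, σ i k * B (0, Pi.single k 1) (0, Pi.single l 1)) := by
      simp_rw [Finset.mul_sum]
      rw [Finset.sum_comm]
      refine Finset.sum_congr rfl fun l _ => Finset.sum_congr rfl fun k _ => ?_
      rw [hsymm (0, Pi.single l 1) (0, Pi.single k 1)]
      ring
    rw [hswap]
    simp_rw [hr2 i]
    simp [Pi.single_apply]
  -- gradient in x of ∂ₜu
  have hvec : grad (fun x' => deriv (fun s => u s x') t) x = τ := by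
    funext i
    show pd (fun x' => deriv (fun s => u s x') t) i x = τ i
    have hfe : (fun x' => deriv (fun s => u s x') t) =ᶠ[nhds x] fun x' => W (t, x') := by
      filter_upwards [hP.eventually_mem hx] with y hy
      exact hut t y ht hy
    rw [pd, hfe.fderiv_eq]
    have h16 : fderiv ℝ (fun x' => W (t, x')) x (Pi.single i 1)
        = fderiv ℝ W (t, x) (0, Pi.single i 1) := by
      have := aux_pd_slice (Ψ := W) hW.differentiableAt i
      rw [pd] at this
      exact this
    rw [h16, hW.fderiv]
    have h17 : (-((B.flip (1, 0)).comp
        ((ContinuousLinearMap.fst ℝ ℝ (Fin m → ℝ)).prod R'))) ((0:ℝ), (Pi.single i 1 : Fin m → ℝ))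
        = -(B ((0:ℝ), σ i) (1, 0)) := by
      simp [hσdef]
    rw [h17, hτval i]
  -- Hessian relations
  have hHmat : ∀ i j, hess (φ t) ρ₀ i j = B (0, Pi.single i 1) (0, Pi.single j 1) :=
    fun i j => hhessB q₀ ht i j
  have hHτ : Matrix.mulVec (hess (φ t) ρ₀) τ = -G := by
    funext j
    have h18 : Matrix.mulVec (hess (φ t) ρ₀) τ j
        = ∑ k, τ k * B (0, Pi.single k 1) (0, Pi.single j 1) := by
      simp only [Matrix.mulVec, dotProduct, hHmat]
      exact Finset.sum_congr rfl fun k _ => by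
        rw [hsymm (0, Pi.single j 1) (0, Pi.single k 1)]; ring
    rw [h18]
    have := hr1 j
    simp only [Pi.neg_apply]
    linarith
  have hun : IsUnit (hess (φ t) ρ₀).det :=
    (Matrix.isUnit_iff_isUnit_det _).mp (hpos t ht ρ₀).isUnit
  have hinvτ : Matrix.mulVec (hess (φ t) ρ₀)⁻¹ G = -τ := by
    have h19 : Matrix.mulVec (hess (φ t) ρ₀)⁻¹ (Matrix.mulVec (hess (φ t) ρ₀) τ) = τ := by
      rw [Matrix.mulVec_mulVec, Matrix.nonsing_inv_mul _ hun, Matrix.one_mulVec]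
    rw [hHτ] at h19
    rw [Matrix.mulVec_neg] at h19
    rw [show Matrix.mulVec (hess (φ t) ρ₀)⁻¹ G = -(-(Matrix.mulVec (hess (φ t) ρ₀)⁻¹ G)) from (neg_neg _).symm, h19]
  constructor
  · rw [hT1, hT2, hGeq, hvec]
    rw [hsplit (1, 0), hBw10 τ]
    have hdt : dotp G τ = ∑ k, τ k * G k :=
      Finset.sum_congr rfl fun k _ => mul_comm _ _
    rw [hdt]
    ring
  · rw [hT1, hT2, hGeq, hinvτ]
    rw [hsplit (1, 0), hBw10 τ]
    have hdt : dotp (-τ) G = -(∑ k, τ k * G k) := by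
      rw [show dotp (-τ) G = ∑ k, -τ k * G k from rfl, ← Finset.sum_neg_distrib]
      exact Finset.sum_congr rfl fun k _ => by ring
    rw [hdt]
    ring
end
end

section
/- Energy identity under the Legendre transform: for every y ∈ Ω and every a ∈ {1,…,n}, the weighted L² energy density of the variation of φ equals the Euclidean L² energy density of the variation of its Legendre dual: ∫_{ℝᵐ} (∂_{y_a}φ(y,ρ))² · det(∇²_ρφ(y,ρ)) dρ = ∫_{P} (∂_{y_a}u(y,x))² dx (as an equality in [0,∞]). In particular the pushforward of the measure det(∇²_ρφ(y,ρ)) dρ under the gradient map ∇_ρφ(y,·) is Lebesgue measure on P, and the harmonic map energy of φ with respect to the L² metric equals the Dirichlet energy of u. -/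
open scoped BigOperators
open MeasureTheory Real

noncomputable section

section aux
variable {k : ℕ}

lemma pi_single_sum (v : Fin k → ℝ) : ∑ j, v j • (Pi.single j 1 : Fin k → ℝ) = v := by
  funext i
  simp [Finset.sum_apply, Pi.single_apply]

lemma fderiv_eq_sum_pd (f : (Fin k → ℝ) → ℝ) (p v : Fin k → ℝ) :
    fderiv ℝ f p v = ∑ j, v j * pd f j p := by
  conv_lhs => rw [← pi_single_sum v]
  rw [map_sum]
  simp [pd, smul_eq_mul]

lemma contDiff_pd {f : (Fin k → ℝ) → ℝ} (hf : ContDiff ℝ (⊤:ℕ∞) f) (i : Fin k) :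
    ContDiff ℝ (⊤:ℕ∞) (pd f i) := by
  have h := (contDiff_infty_iff_fderiv.mp hf).2
  exact (ContinuousLinearMap.apply ℝ ℝ (Pi.single i 1)).contDiff.comp h

end aux
section minlemma
variable {k : ℕ}

lemma posdef_quad {H : Matrix (Fin k) (Fin k) ℝ} (hH : H.PosDef)
    {v : Fin k → ℝ} (hv : v ≠ 0) : 0 < ∑ j, v j * ∑ i, v i * H i j := by
  have h := hH.dotProduct_mulVec_pos hv
  have e : dotProduct (star v) (H.mulVec v) = ∑ j, v j * ∑ i, v i * H i j := by
    simp only [dotProduct, Matrix.mulVec, star_trivial, Finset.mul_sum]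
    rw [Finset.sum_comm]
    exact Finset.sum_congr rfl fun j _ => Finset.sum_congr rfl fun i _ => by ring
  rw [e] at h
  exact h

lemma isMinOn_of_critical {f : (Fin k → ℝ) → ℝ} (hf : ContDiff ℝ (⊤:ℕ∞) f)
    (hpos : ∀ p, (hess f p).PosDef) {ρ₁ : Fin k → ℝ}
    (hcrit : ∀ j, pd f j ρ₁ = 0) (ρ : Fin k → ℝ) : f ρ₁ ≤ f ρ := by
  rcases eq_or_ne ρ ρ₁ with rfl | hne
  · exact le_refl _
  set v : Fin k → ℝ := ρ - ρ₁ with hv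
  have hv0 : v ≠ 0 := sub_ne_zero.mpr hne
  set L : ℝ → (Fin k → ℝ) := fun t => ρ₁ + t • v with hL
  have hLder : ∀ t, HasDerivAt L v t := fun t => by
    simpa [hL] using ((hasDerivAt_id t).smul_const v).const_add ρ₁
  have hdiff : Differentiable ℝ f := hf.differentiable (by simp)
  set G : ℝ → ℝ := fun t => f (L t) with hG
  set G' : ℝ → ℝ := fun t => ∑ j, v j * pd f j (L t) with hG'
  have hGder : ∀ t, HasDerivAt G (G' t) t := by
    intro t
    have h1 := (hdiff (L t)).hasFDerivAt.comp_hasDerivAt t (hLder t)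
    have h2 : fderiv ℝ f (L t) v = G' t := fderiv_eq_sum_pd f (L t) v
    exact h2 ▸ h1
  have hG'der : ∀ t, HasDerivAt G' (∑ j, v j * ∑ i, v i * hess f (L t) i j) t := by
    intro t
    apply HasDerivAt.fun_sum
    intro j _
    have hpdj : Differentiable ℝ (pd f j) := (contDiff_pd hf j).differentiable (by simp)
    have h1 := (hpdj (L t)).hasFDerivAt.comp_hasDerivAt t (hLder t)
    have h2 : fderiv ℝ (pd f j) (L t) v = ∑ i, v i * hess f (L t) i j := by
      rw [fderiv_eq_sum_pd]
      exact Finset.sum_congr rfl fun i _ => rfl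
    exact (h2 ▸ h1).const_mul (v j)
  have hmono : StrictMono G' :=
    strictMono_of_hasDerivAt_pos hG'der fun t => posdef_quad (hpos (L t)) hv0
  have hG'0 : G' 0 = 0 := by
    simp [hG', hL, hcrit]
  have hGmono : MonotoneOn G (Set.Icc (0:ℝ) 1) := by
    apply monotoneOn_of_deriv_nonneg (convex_Icc 0 1)
    · exact (fun t _ => ((hGder t).differentiableAt).continuousAt.continuousWithinAt)
    · exact fun t _ => ((hGder t).differentiableAt).differentiableWithinAt
    · intro t ht
      rw [interior_Icc] at ht
      rw [(hGder t).deriv]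
      have : G' 0 < G' t := hmono ht.1
      linarith [hG'0 ▸ this]
  have h01 : G 0 ≤ G 1 := hGmono (by norm_num) (by norm_num) zero_le_one
  have e0 : G 0 = f ρ₁ := by simp [hG, hL]
  have e1 : G 1 = f ρ := by simp [hG, hL, hv]
  rw [e0, e1] at h01
  exact h01

end minlemma
section aux2
variable {k : ℕ}

def dtp (x : Fin k → ℝ) : (Fin k → ℝ) →L[ℝ] ℝ :=
  ∑ i, x i • (ContinuousLinearMap.proj i : (Fin k → ℝ) →L[ℝ] ℝ)

lemma dtp_apply (x v : Fin k → ℝ) : dtp x v = dotp x v := by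
  simp [dtp, dotp, ContinuousLinearMap.sum_apply]

lemma dotp_eq_dtp (x : Fin k → ℝ) : (fun v => dotp x v) = fun v => dtp x v :=
  funext fun v => (dtp_apply x v).symm

lemma hasFDerivAt_dotp (x p : Fin k → ℝ) : HasFDerivAt (fun v => dotp x v) (dtp x) p := by
  rw [dotp_eq_dtp]; exact (dtp x).hasFDerivAt

lemma contDiff_dotp (x : Fin k → ℝ) : ContDiff ℝ (⊤:ℕ∞) (fun v => dotp x v) := by
  rw [dotp_eq_dtp]; exact (dtp x).contDiff

lemma dtp_single (x : Fin k → ℝ) (j : Fin k) : dtp x (Pi.single j 1) = x j := by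
  rw [dtp_apply]
  simp [dotp, Pi.single_apply]

lemma pd_sub_dotp {g : (Fin k → ℝ) → ℝ} (hg : ContDiff ℝ (⊤:ℕ∞) g) (x : Fin k → ℝ)
    (j : Fin k) (q : Fin k → ℝ) :
    pd (fun ρ => g ρ - dotp x ρ) j q = pd g j q - x j := by
  unfold pd
  rw [fderiv_fun_sub (hg.differentiable (by simp) q) (hasFDerivAt_dotp x q).differentiableAt,
    (hasFDerivAt_dotp x q).fderiv]
  simp [dtp_single]

lemma hess_sub_dotp {g : (Fin k → ℝ) → ℝ} (hg : ContDiff ℝ (⊤:ℕ∞) g) (x p : Fin k → ℝ) :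
    hess (fun ρ => g ρ - dotp x ρ) p = hess g p := by
  ext i j
  show pd (fun q => pd (fun ρ => g ρ - dotp x ρ) j q) i p = pd (fun q => pd g j q) i p
  have h1 : (fun q => pd (fun ρ => g ρ - dotp x ρ) j q) = fun q => pd g j q - x j :=
    funext (pd_sub_dotp hg x j)
  rw [h1]
  unfold pd
  rw [fderiv_sub_const]

lemma contDiff_grad {f : (Fin k → ℝ) → ℝ} (hf : ContDiff ℝ (⊤:ℕ∞) f) :
    ContDiff ℝ (⊤:ℕ∞) (grad f) :=
  contDiff_pi.mpr fun i => contDiff_pd hf i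

lemma fderiv_grad_det {f : (Fin k → ℝ) → ℝ} (hf : ContDiff ℝ (⊤:ℕ∞) f) (p : Fin k → ℝ) :
    (fderiv ℝ (grad f) p).det = (hess f p).det := by
  have hdg : ∀ i, DifferentiableAt ℝ (fun q => pd f i q) p := fun i =>
    ((contDiff_pd hf i).differentiable (by simp) p)
  have hM : LinearMap.toMatrix'
      ((fderiv ℝ (grad f) p) : (Fin k → ℝ) →ₗ[ℝ] (Fin k → ℝ)) = (hess f p).transpose := by
    ext i j
    rw [LinearMap.toMatrix'_apply]
    have h0 : (fun j' => if j' = j then (1:ℝ) else 0) = Pi.single j 1 := by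
      funext j'; simp [Pi.single_apply]
    show fderiv ℝ (grad f) p (Pi.single j 1) i = (hess f p).transpose i j
    rw [show grad f = (fun q i => pd f i q) from rfl, fderiv_pi hdg]
    simp only [ContinuousLinearMap.pi_apply]
    rfl
  have h1 : (fderiv ℝ (grad f) p).det
      = LinearMap.det ((fderiv ℝ (grad f) p) : (Fin k → ℝ) →ₗ[ℝ] (Fin k → ℝ)) := rfl
  rw [h1, ← LinearMap.det_toMatrix', hM, Matrix.det_transpose]

end aux2

/-- **Energy identity under the Legendre transform:** for `y ∈ Ω` and each `a`,
`∫_{ℝᵐ} (∂_{y_a}φ)² det(∇²_ρφ) dρ = ∫_P (∂_{y_a}u)² dx` (in `[0,∞]`); moreover the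
pushforward of `det(∇²_ρφ(y,ρ)) dρ` under `∇_ρφ(y,·)` is Lebesgue measure on `P`. -/
theorem legendre_energy_identity
    {m n : ℕ} (hm : 1 ≤ m) (hn : 1 ≤ n)
    (Ω : Set (Fin n → ℝ)) (hΩ : IsOpen Ω)
    (P : Set (Fin m → ℝ)) (hP : IsOpen P)
    (φ : (Fin n → ℝ) → (Fin m → ℝ) → ℝ)
    (hφ : ContDiffOn ℝ (⊤ : ℕ∞)
      (fun p : (Fin n → ℝ) × (Fin m → ℝ) => φ p.1 p.2) (Ω ×ˢ Set.univ))
    (hpos : ∀ y ∈ Ω, ∀ ρ : Fin m → ℝ, (hess (φ y) ρ).PosDef)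
    (R : (Fin n → ℝ) → (Fin m → ℝ) → (Fin m → ℝ))
    (hmem : ∀ y ∈ Ω, ∀ ρ : Fin m → ℝ, grad (φ y) ρ ∈ P)
    (hR₁ : ∀ y ∈ Ω, ∀ x ∈ P, grad (φ y) (R y x) = x)
    (hR₂ : ∀ y ∈ Ω, ∀ ρ : Fin m → ℝ, R y (grad (φ y) ρ) = ρ)
    (u : (Fin n → ℝ) → (Fin m → ℝ) → ℝ)
    (hu : ∀ y ∈ Ω, ∀ x ∈ P, u y x = dotp x (R y x) - φ y (R y x))
    (husm : ContDiffOn ℝ (⊤ : ℕ∞)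
      (fun p : (Fin n → ℝ) × (Fin m → ℝ) => u p.1 p.2) (Ω ×ˢ P)) :
    ∀ y ∈ Ω,
      (∀ a : Fin n,
          (∫⁻ ρ : Fin m → ℝ,
              ENNReal.ofReal
                ((pd (fun y' => φ y' ρ) a y) ^ 2 * (hess (φ y) ρ).det))
            = ∫⁻ x in P, ENNReal.ofReal ((pd (fun y' => u y' x) a y) ^ 2))
        ∧ Measure.map (grad (φ y))
              (volume.withDensity fun ρ => ENNReal.ofReal (hess (φ y) ρ).det)
            = volume.restrict P := by
  intro y hy
  -- smoothness of the slices φ y'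
  have hsm : ∀ y' ∈ Ω, ContDiff ℝ (⊤:ℕ∞) (φ y') := by
    intro y' hy'
    rw [contDiff_iff_contDiffAt]
    intro ρ
    have h1 : ContDiffAt ℝ (⊤:ℕ∞) (fun p : (Fin n → ℝ) × (Fin m → ℝ) => φ p.1 p.2) (y', ρ) :=
      hφ.contDiffAt ((hΩ.prod isOpen_univ).mem_nhds ⟨hy', trivial⟩)
    exact h1.comp ρ ((contDiff_const.prodMk contDiff_id).contDiffAt)
  have hφy : ContDiff ℝ (⊤:ℕ∞) (φ y) := hsm y hy
  set g : (Fin m → ℝ) → (Fin m → ℝ) := grad (φ y) with hg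
  have hginj : Set.InjOn g Set.univ := by
    intro a _ b _ hab
    have := congrArg (R y) hab
    rwa [hg, hR₂ y hy a, hR₂ y hy b] at this
  have himg : g '' Set.univ = P := by
    ext x
    constructor
    · rintro ⟨ρ, -, rfl⟩
      exact hmem y hy ρ
    · intro hx
      exact ⟨R y x, trivial, hR₁ y hy x hx⟩
  have hgdiff : Differentiable ℝ g := (contDiff_grad hφy).differentiable (by simp)
  have hf' : ∀ ρ ∈ Set.univ, HasFDerivWithinAt g (fderiv ℝ g ρ) Set.univ ρ := fun ρ _ =>
    (hgdiff ρ).hasFDerivAt.hasFDerivWithinAt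
  have hdet : ∀ ρ : Fin m → ℝ,
      ENNReal.ofReal |(fderiv ℝ g ρ).det| = ENNReal.ofReal ((hess (φ y) ρ).det) := by
    intro ρ
    rw [hg, fderiv_grad_det hφy, abs_of_pos (hpos y hy ρ).det_pos]
  -- the key pointwise derivative identity
  have key : ∀ x ∈ P, ∀ a : Fin n,
      pd (fun y' => u y' x) a y = - pd (fun y' => φ y' (R y x)) a y := by
    intro x hx
    set ρ₀ : Fin m → ℝ := R y x with hρ₀
    set h : (Fin n → ℝ) → ℝ := fun y' => u y' x - dotp x ρ₀ + φ y' ρ₀ with hh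
    have hy0 : h y = 0 := by rw [hh]; simp only; rw [hu y hy x hx]; ring
    have hnonneg : ∀ y' ∈ Ω, 0 ≤ h y' := by
      intro y' hy'
      have hφy' : ContDiff ℝ (⊤:ℕ∞) (φ y') := hsm y' hy'
      have hψC : ContDiff ℝ (⊤:ℕ∞) (fun ρ => φ y' ρ - dotp x ρ) :=
        hφy'.sub (contDiff_dotp x)
      have hψpos : ∀ p, (hess (fun ρ => φ y' ρ - dotp x ρ) p).PosDef := fun p =>
        (hess_sub_dotp hφy' x p).symm ▸ hpos y' hy' p
      have hcrit : ∀ j, pd (fun ρ => φ y' ρ - dotp x ρ) j (R y' x) = 0 := by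
        intro j
        rw [pd_sub_dotp hφy' x j (R y' x)]
        have hgr : grad (φ y') (R y' x) j = x j := congrFun (hR₁ y' hy' x hx) j
        have : pd (φ y') j (R y' x) = x j := hgr
        rw [this, sub_self]
      have hmin := isMinOn_of_critical hψC hψpos hcrit ρ₀
      have hu' := hu y' hy' x hx
      rw [hh]
      simp only
      rw [hu']
      linarith
    have hloc : IsLocalMin h y := by
      filter_upwards [hΩ.mem_nhds hy] with y' hy'
      rw [hy0]
      exact hnonneg y' hy'
    have hud : DifferentiableAt ℝ (fun y' => u y' x) y := by
      have h1 : ContDiffAt ℝ (⊤:ℕ∞) (fun p : (Fin n → ℝ) × (Fin m → ℝ) => u p.1 p.2) (y, x) :=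
        husm.contDiffAt ((hΩ.prod hP).mem_nhds ⟨hy, hx⟩)
      exact (h1.comp y ((contDiff_id.prodMk contDiff_const).contDiffAt)).differentiableAt
        (by simp)
    have hφd : DifferentiableAt ℝ (fun y' => φ y' ρ₀) y := by
      have h1 : ContDiffAt ℝ (⊤:ℕ∞) (fun p : (Fin n → ℝ) × (Fin m → ℝ) => φ p.1 p.2) (y, ρ₀) :=
        hφ.contDiffAt ((hΩ.prod isOpen_univ).mem_nhds ⟨hy, trivial⟩)
      exact (h1.comp y ((contDiff_id.prodMk contDiff_const).contDiffAt)).differentiableAt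
        (by simp)
    have hdh : fderiv ℝ h y = 0 := hloc.fderiv_eq_zero
    intro a
    have hcomp : fderiv ℝ h y (Pi.single a 1)
        = pd (fun y' => u y' x) a y + pd (fun y' => φ y' ρ₀) a y := by
      have e1 : h = fun y' => (fun y' => u y' x - dotp x ρ₀) y' + (fun y' => φ y' ρ₀) y' := rfl
      rw [e1, fderiv_fun_add (hud.sub_const _) hφd]
      simp only [ContinuousLinearMap.add_apply]
      unfold pd
      rw [fderiv_sub_const]
    rw [hdh] at hcomp
    simp only [ContinuousLinearMap.zero_apply] at hcomp
    linarith
  constructor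
  · intro a
    have hCOV := lintegral_image_eq_lintegral_abs_det_fderiv_mul volume MeasurableSet.univ hf'
      hginj (fun x => ENNReal.ofReal ((pd (fun y' => u y' x) a y) ^ 2))
    rw [himg, Measure.restrict_univ] at hCOV
    rw [hCOV]
    apply lintegral_congr
    intro ρ
    have e1 : pd (fun y' => u y' (g ρ)) a y = - pd (fun y' => φ y' ρ) a y := by
      have := key (g ρ) (hmem y hy ρ) a
      rwa [hg, hR₂ y hy ρ] at this
    rw [e1, hdet ρ, ENNReal.ofReal_mul (sq_nonneg _), neg_sq, mul_comm]
  · have hmap := map_withDensity_abs_det_fderiv_eq_addHaar volume MeasurableSet.univ.nullMeasurableSet hf'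
      hginj
    rw [himg, Measure.restrict_univ] at hmap
    have : (fun ρ => ENNReal.ofReal |(fderiv ℝ g ρ).det|)
        = fun ρ => ENNReal.ofReal ((hess (φ y) ρ).det) := funext hdet
    rw [this] at hmap
    exact hmap
end
end
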